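/- arXiv:2505.05140 — 4 statements merged into one kernel-verified Lean document; each statement's English description precedes it below -/
import Mathlib

section
/- Let T > 0, let p, q : [0,T] → ℝ be continuous, and let u, v ∈ C¹([0,T]×[0,T]; ℂ²) both satisfy i ∂u/∂t + J ∂u/∂x + V(x) u = 0 on [0,T]×[0,T]. Assume u(x,0) = v(x,0) = 0 for all x ∈ [0,T] and u(T,t) = v(T,t) = 0 for all t ∈ [0,T]. Then ∫₀^T u(x,T) · conj(v(x,T)) dx = −i ∫₀^T [ u₂(0,η) conj(v₁(0,η)) − u₁(0,η) conj(v₂(0,η)) ] dη. -/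
open MeasureTheory Set

noncomputable section

/-- The matrix `J = [[0,1],[-1,0]]`. -/
def Jmat : Matrix (Fin 2) (Fin 2) ℂ := !![0, 1; -1, 0]

/-- The potential matrix `V(x) = [[p x, q x],[q x, -p x]]`. -/
def Vmat (p q : ℝ → ℝ) (x : ℝ) : Matrix (Fin 2) (Fin 2) ℂ :=
  !![(p x : ℂ), (q x : ℂ); (q x : ℂ), -(p x : ℂ)]

/-- The square `[0,T] × [0,T]`. -/
def Sq (T : ℝ) : Set (ℝ × ℝ) := Icc (0 : ℝ) T ×ˢ Icc (0 : ℝ) T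

/-- The Dirac equation `i ∂u/∂t + J ∂u/∂x + V u = 0` holding at every point of `D`,
partial derivatives being taken within `D`. -/
def DiracOn (p q : ℝ → ℝ) (D : Set (ℝ × ℝ)) (u : ℝ × ℝ → Fin 2 → ℂ) : Prop :=
  ∀ z ∈ D,
    Complex.I • (fderivWithin ℝ u D z ((0 : ℝ), (1 : ℝ)))
      + Jmat.mulVec (fderivWithin ℝ u D z ((1 : ℝ), (0 : ℝ)))
      + (Vmat p q z.1).mulVec (u z) = 0

namespace Stmt5Aux

lemma mem_Sq {T x t : ℝ} (hx : x ∈ Icc (0:ℝ) T) (ht : t ∈ Icc (0:ℝ) T) : (x, t) ∈ Sq T :=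
  Set.mem_prod.mpr ⟨hx, ht⟩

/-- the integrand `u · conj v`. -/
def Fb (u v : ℝ × ℝ → Fin 2 → ℂ) (z : ℝ × ℝ) : ℂ :=
  u z 0 * (starRingEnd ℂ) (v z 0) + u z 1 * (starRingEnd ℂ) (v z 1)

/-- the flux `i (Ju · conj v)`. -/
def Gb (u v : ℝ × ℝ → Fin 2 → ℂ) (z : ℝ × ℝ) : ℂ :=
  Complex.I * (u z 1 * (starRingEnd ℂ) (v z 0) - u z 0 * (starRingEnd ℂ) (v z 1))

/-- time derivative of `Fb`. -/
def hb (T : ℝ) (u v : ℝ × ℝ → Fin 2 → ℂ) (z : ℝ × ℝ) : ℂ :=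
  fderivWithin ℝ u (Sq T) z (0, 1) 0 * (starRingEnd ℂ) (v z 0)
    + u z 0 * (starRingEnd ℂ) (fderivWithin ℝ v (Sq T) z (0, 1) 0)
    + (fderivWithin ℝ u (Sq T) z (0, 1) 1 * (starRingEnd ℂ) (v z 1)
      + u z 1 * (starRingEnd ℂ) (fderivWithin ℝ v (Sq T) z (0, 1) 1))

/-- space derivative of `Gb`. -/
def gb (T : ℝ) (u v : ℝ × ℝ → Fin 2 → ℂ) (z : ℝ × ℝ) : ℂ :=
  Complex.I * (fderivWithin ℝ u (Sq T) z (1, 0) 1 * (starRingEnd ℂ) (v z 0)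
      + u z 1 * (starRingEnd ℂ) (fderivWithin ℝ v (Sq T) z (1, 0) 0)
    - (fderivWithin ℝ u (Sq T) z (1, 0) 0 * (starRingEnd ℂ) (v z 1)
      + u z 0 * (starRingEnd ℂ) (fderivWithin ℝ v (Sq T) z (1, 0) 1)))

lemma slice_deriv_t {T : ℝ} {w : ℝ × ℝ → Fin 2 → ℂ}
    (hw : ContDiffOn ℝ 1 w (Sq T)) {x t : ℝ}
    (hx : x ∈ Icc (0:ℝ) T) (ht : t ∈ Icc (0:ℝ) T) (k : Fin 2) :
    HasDerivWithinAt (fun s => w (x, s) k)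
      (fderivWithin ℝ w (Sq T) (x, t) (0, 1) k) (Icc (0:ℝ) T) t := by
  have hz : (x, t) ∈ Sq T := mem_Sq hx ht
  have hd : HasFDerivWithinAt w (fderivWithin ℝ w (Sq T) (x, t)) (Sq T) (x, t) :=
    ((hw.differentiableOn one_ne_zero) _ hz).hasFDerivWithinAt
  have hmaps : MapsTo (fun s : ℝ => ((x : ℝ), s)) (Icc (0:ℝ) T) (Sq T) :=
    fun s hs => mem_Sq hx hs
  have hline : HasDerivWithinAt (fun s : ℝ => ((x : ℝ), s)) ((0:ℝ), (1:ℝ)) (Icc (0:ℝ) T) t :=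
    (HasDerivAt.prodMk (hasDerivAt_const t x) (hasDerivAt_id t)).hasDerivWithinAt
  exact hasDerivWithinAt_pi.1 (hd.comp_hasDerivWithinAt t hline hmaps) k

lemma slice_deriv_x {T : ℝ} {w : ℝ × ℝ → Fin 2 → ℂ}
    (hw : ContDiffOn ℝ 1 w (Sq T)) {x t : ℝ}
    (hx : x ∈ Icc (0:ℝ) T) (ht : t ∈ Icc (0:ℝ) T) (k : Fin 2) :
    HasDerivWithinAt (fun s => w (s, t) k)
      (fderivWithin ℝ w (Sq T) (x, t) (1, 0) k) (Icc (0:ℝ) T) x := by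
  have hz : (x, t) ∈ Sq T := mem_Sq hx ht
  have hd : HasFDerivWithinAt w (fderivWithin ℝ w (Sq T) (x, t)) (Sq T) (x, t) :=
    ((hw.differentiableOn one_ne_zero) _ hz).hasFDerivWithinAt
  have hmaps : MapsTo (fun s : ℝ => (s, (t : ℝ))) (Icc (0:ℝ) T) (Sq T) :=
    fun s hs => mem_Sq hs ht
  have hline : HasDerivWithinAt (fun s : ℝ => (s, (t : ℝ))) ((1:ℝ), (0:ℝ)) (Icc (0:ℝ) T) x :=
    (HasDerivAt.prodMk (hasDerivAt_id x) (hasDerivAt_const x t)).hasDerivWithinAt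
  exact hasDerivWithinAt_pi.1 (hd.comp_hasDerivWithinAt x hline hmaps) k

lemma F_slice_deriv {T : ℝ} {u v : ℝ × ℝ → Fin 2 → ℂ}
    (hu : ContDiffOn ℝ 1 u (Sq T)) (hv : ContDiffOn ℝ 1 v (Sq T))
    {x t : ℝ} (hx : x ∈ Icc (0:ℝ) T) (ht : t ∈ Icc (0:ℝ) T) :
    HasDerivWithinAt (fun s => Fb u v (x, s)) (hb T u v (x, t)) (Icc (0:ℝ) T) t := by
  have u0 := slice_deriv_t hu hx ht 0
  have u1 := slice_deriv_t hu hx ht 1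
  have v0 := (slice_deriv_t hv hx ht 0).star
  have v1 := (slice_deriv_t hv hx ht 1).star
  have := (u0.mul v0).add (u1.mul v1)
  simpa [Fb, hb, Complex.star_def, Pi.mul_def, Pi.add_def] using this

lemma G_slice_deriv {T : ℝ} {u v : ℝ × ℝ → Fin 2 → ℂ}
    (hu : ContDiffOn ℝ 1 u (Sq T)) (hv : ContDiffOn ℝ 1 v (Sq T))
    {x t : ℝ} (hx : x ∈ Icc (0:ℝ) T) (ht : t ∈ Icc (0:ℝ) T) :
    HasDerivWithinAt (fun s => Gb u v (s, t)) (gb T u v (x, t)) (Icc (0:ℝ) T) x := by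
  have u0 := slice_deriv_x hu hx ht 0
  have u1 := slice_deriv_x hu hx ht 1
  have v0 := (slice_deriv_x hv hx ht 0).star
  have v1 := (slice_deriv_x hv hx ht 1).star
  have := ((u1.mul v0).sub (u0.mul v1)).const_mul Complex.I
  simpa [Gb, gb, Complex.star_def] using this


lemma pde_comp {T : ℝ} {p q : ℝ → ℝ} {w : ℝ × ℝ → Fin 2 → ℂ}
    (hw : DiracOn p q (Sq T) w) {z : ℝ × ℝ} (hz : z ∈ Sq T) :
    Complex.I * fderivWithin ℝ w (Sq T) z (0, 1) 0 + fderivWithin ℝ w (Sq T) z (1, 0) 1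
      + ((p z.1 : ℂ) * w z 0 + (q z.1 : ℂ) * w z 1) = 0 ∧
    Complex.I * fderivWithin ℝ w (Sq T) z (0, 1) 1 - fderivWithin ℝ w (Sq T) z (1, 0) 0
      + ((q z.1 : ℂ) * w z 0 - (p z.1 : ℂ) * w z 1) = 0 := by
  have h0 := congrFun (hw z hz) 0
  have h1 := congrFun (hw z hz) 1
  simp [Jmat, Vmat, Matrix.mulVec, dotProduct, Fin.sum_univ_two, Matrix.vecHead,
    Matrix.vecTail, Function.comp, Pi.smul_apply, smul_eq_mul] at h0 h1
  exact ⟨by linear_combination h0, by linear_combination h1⟩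

lemma hb_eq_gb {T : ℝ} {p q : ℝ → ℝ} {u v : ℝ × ℝ → Fin 2 → ℂ}
    (hueq : DiracOn p q (Sq T) u) (hveq : DiracOn p q (Sq T) v)
    {z : ℝ × ℝ} (hz : z ∈ Sq T) : hb T u v z = gb T u v z := by
  obtain ⟨eu0, eu1⟩ := pde_comp hueq hz
  obtain ⟨ev0, ev1⟩ := pde_comp hveq hz
  have ev0c := congrArg (starRingEnd ℂ) ev0
  have ev1c := congrArg (starRingEnd ℂ) ev1
  simp only [map_add, map_sub, map_mul, map_zero, Complex.conj_I, Complex.conj_ofReal] at ev0c ev1c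
  unfold hb gb
  linear_combination (-Complex.I * (starRingEnd ℂ) (v z 0)) * eu0
    + (-Complex.I * (starRingEnd ℂ) (v z 1)) * eu1
    + (Complex.I * u z 0) * ev0c + (Complex.I * u z 1) * ev1c
    + (fderivWithin ℝ u (Sq T) z (0, 1) 0 * (starRingEnd ℂ) (v z 0)
      + u z 0 * (starRingEnd ℂ) (fderivWithin ℝ v (Sq T) z (0, 1) 0)
      + fderivWithin ℝ u (Sq T) z (0, 1) 1 * (starRingEnd ℂ) (v z 1)
      + u z 1 * (starRingEnd ℂ) (fderivWithin ℝ v (Sq T) z (0, 1) 1)) * Complex.I_sq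


lemma cont_comp {T : ℝ} {w : ℝ × ℝ → Fin 2 → ℂ} (hw : ContDiffOn ℝ 1 w (Sq T)) (k : Fin 2) :
    ContinuousOn (fun z => w z k) (Sq T) :=
  (continuous_apply k).comp_continuousOn hw.continuousOn

lemma cont_conj_comp {T : ℝ} {w : ℝ × ℝ → Fin 2 → ℂ} (hw : ContDiffOn ℝ 1 w (Sq T)) (k : Fin 2) :
    ContinuousOn (fun z => (starRingEnd ℂ) (w z k)) (Sq T) :=
  Complex.continuous_conj.comp_continuousOn (cont_comp hw k)

lemma cont_fd {T : ℝ} (hT : 0 < T) {w : ℝ × ℝ → Fin 2 → ℂ}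
    (hw : ContDiffOn ℝ 1 w (Sq T)) (a : ℝ × ℝ) (k : Fin 2) :
    ContinuousOn (fun z => fderivWithin ℝ w (Sq T) z a k) (Sq T) := by
  have h1 : ContinuousOn (fun z => fderivWithin ℝ w (Sq T) z) (Sq T) :=
    hw.continuousOn_fderivWithin ((uniqueDiffOn_Icc hT).prod (uniqueDiffOn_Icc hT)) le_rfl
  have h2 : Continuous fun L : (ℝ × ℝ) →L[ℝ] (Fin 2 → ℂ) => L a k :=
    (continuous_apply k).comp (ContinuousLinearMap.apply ℝ (Fin 2 → ℂ) a).continuous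
  exact h2.comp_continuousOn h1

lemma cont_fd_conj {T : ℝ} (hT : 0 < T) {w : ℝ × ℝ → Fin 2 → ℂ}
    (hw : ContDiffOn ℝ 1 w (Sq T)) (a : ℝ × ℝ) (k : Fin 2) :
    ContinuousOn (fun z => (starRingEnd ℂ) (fderivWithin ℝ w (Sq T) z a k)) (Sq T) :=
  Complex.continuous_conj.comp_continuousOn (cont_fd hT hw a k)

lemma cont_Fb {T : ℝ} {u v : ℝ × ℝ → Fin 2 → ℂ}
    (hu : ContDiffOn ℝ 1 u (Sq T)) (hv : ContDiffOn ℝ 1 v (Sq T)) :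
    ContinuousOn (Fb u v) (Sq T) :=
  ((cont_comp hu 0).mul (cont_conj_comp hv 0)).add ((cont_comp hu 1).mul (cont_conj_comp hv 1))

lemma cont_Gb {T : ℝ} {u v : ℝ × ℝ → Fin 2 → ℂ}
    (hu : ContDiffOn ℝ 1 u (Sq T)) (hv : ContDiffOn ℝ 1 v (Sq T)) :
    ContinuousOn (Gb u v) (Sq T) :=
  continuousOn_const.mul (((cont_comp hu 1).mul (cont_conj_comp hv 0)).sub
    ((cont_comp hu 0).mul (cont_conj_comp hv 1)))

lemma cont_hb {T : ℝ} (hT : 0 < T) {u v : ℝ × ℝ → Fin 2 → ℂ}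
    (hu : ContDiffOn ℝ 1 u (Sq T)) (hv : ContDiffOn ℝ 1 v (Sq T)) :
    ContinuousOn (hb T u v) (Sq T) :=
  (((cont_fd hT hu _ 0).mul (cont_conj_comp hv 0)).add
      ((cont_comp hu 0).mul (cont_fd_conj hT hv _ 0))).add
    (((cont_fd hT hu _ 1).mul (cont_conj_comp hv 1)).add
      ((cont_comp hu 1).mul (cont_fd_conj hT hv _ 1)))

lemma cont_gb {T : ℝ} (hT : 0 < T) {u v : ℝ × ℝ → Fin 2 → ℂ}
    (hu : ContDiffOn ℝ 1 u (Sq T)) (hv : ContDiffOn ℝ 1 v (Sq T)) :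
    ContinuousOn (gb T u v) (Sq T) :=
  continuousOn_const.mul
    ((((cont_fd hT hu _ 1).mul (cont_conj_comp hv 0)).add
        ((cont_comp hu 1).mul (cont_fd_conj hT hv _ 0))).sub
      (((cont_fd hT hu _ 0).mul (cont_conj_comp hv 1)).add
        ((cont_comp hu 0).mul (cont_fd_conj hT hv _ 1))))

lemma ftc_t {T : ℝ} (hT : 0 < T) {u v : ℝ × ℝ → Fin 2 → ℂ}
    (hu : ContDiffOn ℝ 1 u (Sq T)) (hv : ContDiffOn ℝ 1 v (Sq T))
    {x : ℝ} (hx : x ∈ Icc (0:ℝ) T) :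
    ∫ t in (0:ℝ)..T, hb T u v (x, t) = Fb u v (x, T) - Fb u v (x, 0) := by
  have hmap : MapsTo (fun s : ℝ => ((x : ℝ), s)) (Icc (0:ℝ) T) (Sq T) := fun s hs => mem_Sq hx hs
  apply intervalIntegral.integral_eq_sub_of_hasDeriv_right_of_le hT.le
  · exact (cont_Fb hu hv).comp
      (Continuous.continuousOn (continuous_const.prodMk continuous_id)) hmap
  · intro t ht
    exact ((F_slice_deriv hu hv hx (Ioo_subset_Icc_self ht)).hasDerivAt
      (Icc_mem_nhds ht.1 ht.2)).hasDerivWithinAt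
  · have hc : ContinuousOn (fun t => hb T u v (x, t)) (Icc (0:ℝ) T) :=
      (cont_hb hT hu hv).comp
        (Continuous.continuousOn (continuous_const.prodMk continuous_id)) hmap
    rw [← uIcc_of_le hT.le] at hc
    exact hc.intervalIntegrable

lemma ftc_x {T : ℝ} (hT : 0 < T) {u v : ℝ × ℝ → Fin 2 → ℂ}
    (hu : ContDiffOn ℝ 1 u (Sq T)) (hv : ContDiffOn ℝ 1 v (Sq T))
    {t : ℝ} (ht : t ∈ Icc (0:ℝ) T) :
    ∫ x in (0:ℝ)..T, gb T u v (x, t) = Gb u v (T, t) - Gb u v (0, t) := by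
  have hmap : MapsTo (fun s : ℝ => (s, (t : ℝ))) (Icc (0:ℝ) T) (Sq T) := fun s hs => mem_Sq hs ht
  apply intervalIntegral.integral_eq_sub_of_hasDeriv_right_of_le hT.le
  · exact (cont_Gb hu hv).comp
      (Continuous.continuousOn (continuous_id.prodMk continuous_const)) hmap
  · intro x hx
    exact ((G_slice_deriv hu hv (Ioo_subset_Icc_self hx) ht).hasDerivAt
      (Icc_mem_nhds hx.1 hx.2)).hasDerivWithinAt
  · have hc : ContinuousOn (fun x => gb T u v (x, t)) (Icc (0:ℝ) T) :=
      (cont_gb hT hu hv).comp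
        (Continuous.continuousOn (continuous_id.prodMk continuous_const)) hmap
    rw [← uIcc_of_le hT.le] at hc
    exact hc.intervalIntegrable

lemma swap_integral {T : ℝ} (hT : 0 < T) {f : ℝ × ℝ → ℂ} (hf : ContinuousOn f (Sq T)) :
    (∫ x in (0:ℝ)..T, ∫ t in (0:ℝ)..T, f (x, t))
      = ∫ t in (0:ℝ)..T, ∫ x in (0:ℝ)..T, f (x, t) := by
  have hint : IntegrableOn f (Sq T) := hf.integrableOn_compact (isCompact_Icc.prod isCompact_Icc)
  have h2 : IntegrableOn f (Ioc (0:ℝ) T ×ˢ Ioc (0:ℝ) T) :=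
    hint.mono_set (Set.prod_mono Ioc_subset_Icc_self Ioc_subset_Icc_self)
  simp_rw [intervalIntegral.integral_of_le hT.le]
  apply MeasureTheory.integral_integral_swap
  have he : Function.uncurry (fun x t => f (x, t)) = f := rfl
  rw [he, Measure.prod_restrict, ← Measure.volume_eq_prod ℝ ℝ]
  exact h2

end Stmt5Aux

open Stmt5Aux

/-- The Blagovestchenskii-type identity: the inner product of the
final states is expressed via the boundary traces. -/
theorem stmt5 (T : ℝ) (hT : 0 < T) (p q : ℝ → ℝ)
    (hp : ContinuousOn p (Icc 0 T)) (hq : ContinuousOn q (Icc 0 T))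
    (u v : ℝ × ℝ → Fin 2 → ℂ)
    (hu : ContDiffOn ℝ 1 u (Sq T)) (hv : ContDiffOn ℝ 1 v (Sq T))
    (hueq : DiracOn p q (Sq T) u) (hveq : DiracOn p q (Sq T) v)
    (hu0 : ∀ x ∈ Icc (0 : ℝ) T, u (x, 0) = 0)
    (hv0 : ∀ x ∈ Icc (0 : ℝ) T, v (x, 0) = 0)
    (huT : ∀ t ∈ Icc (0 : ℝ) T, u (T, t) = 0)
    (hvT : ∀ t ∈ Icc (0 : ℝ) T, v (T, t) = 0) :
    (∫ x in (0 : ℝ)..T,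
        (u (x, T) 0 * (starRingEnd ℂ) (v (x, T) 0) +
          u (x, T) 1 * (starRingEnd ℂ) (v (x, T) 1)))
      = -Complex.I *
        ∫ η in (0 : ℝ)..T,
          (u (0, η) 1 * (starRingEnd ℂ) (v (0, η) 0) -
            u (0, η) 0 * (starRingEnd ℂ) (v (0, η) 1)) := by
  have hT' : (0:ℝ) ≤ T := hT.le
  have hTmem : T ∈ Icc (0:ℝ) T := ⟨hT', le_rfl⟩
  have h0mem : (0:ℝ) ∈ Icc (0:ℝ) T := ⟨le_rfl, hT'⟩
  have key : (∫ x in (0:ℝ)..T, Fb u v (x, T))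
      = -Complex.I * ∫ η in (0 : ℝ)..T,
          (u (0, η) 1 * (starRingEnd ℂ) (v (0, η) 0) -
            u (0, η) 0 * (starRingEnd ℂ) (v (0, η) 1)) := by
    calc (∫ x in (0:ℝ)..T, Fb u v (x, T))
        = ∫ x in (0:ℝ)..T, ∫ t in (0:ℝ)..T, hb T u v (x, t) := by
          apply intervalIntegral.integral_congr
          intro x hx
          rw [uIcc_of_le hT'] at hx
          have h1 := ftc_t hT hu hv hx
          have h2 : Fb u v (x, 0) = 0 := by simp [Fb, hu0 x hx]
          rw [h2, sub_zero] at h1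
          exact h1.symm
      _ = ∫ t in (0:ℝ)..T, ∫ x in (0:ℝ)..T, hb T u v (x, t) :=
          swap_integral hT (cont_hb hT hu hv)
      _ = ∫ t in (0:ℝ)..T, -Gb u v (0, t) := by
          apply intervalIntegral.integral_congr
          intro t ht
          rw [uIcc_of_le hT'] at ht
          have e1 : (∫ x in (0:ℝ)..T, hb T u v (x, t)) = ∫ x in (0:ℝ)..T, gb T u v (x, t) := by
            apply intervalIntegral.integral_congr
            intro x hx
            rw [uIcc_of_le hT'] at hx
            exact hb_eq_gb hueq hveq (mem_Sq hx ht)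
          have h1 := ftc_x hT hu hv ht
          have h2 : Gb u v (T, t) = 0 := by simp [Gb, huT t ht]
          rw [h2, zero_sub] at h1
          exact e1.trans h1
      _ = -Complex.I * ∫ η in (0 : ℝ)..T,
            (u (0, η) 1 * (starRingEnd ℂ) (v (0, η) 0) -
              u (0, η) 0 * (starRingEnd ℂ) (v (0, η) 1)) := by
          rw [intervalIntegral.integral_neg]
          unfold Gb
          rw [intervalIntegral.integral_const_mul, neg_mul]
  exact key
end
end

section
/- Let T > 0, let p, q : [0,T] → ℝ be continuous, and let r : [0,T] → ℂ be continuous, extended by zero to negative arguments. Let f, g ∈ C¹([0,T]; ℂ) with f(0) = f′(0) = g(0) = g′(0) = 0, and let u, v ∈ C¹([0,T]×[0,T]; ℂ²) satisfy i ∂u/∂t + J ∂u/∂x + V(x) u = 0 on [0,T]×[0,T], u(x,t) = v(x,t) = 0 whenever t < x, u₁(0,t) = f(t), v₁(0,t) = g(t), and suppose the boundary traces have the convolution form u₂(0,t) = i f(t) + ∫₀^t r(t−s) f(s) ds and v₂(0,t) = i g(t) + ∫₀^t r(t−s) g(s) ds for t ∈ [0,T]. Then ∫₀^T u(x,T) ·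 conj(v(x,T)) dx = 2 ∫₀^T f(t) conj(g(t)) dt − i ∫₀^T ∫₀^T [ r(t−s) − conj(r(s−t)) ] f(s) conj(g(t)) ds dt. -/
open MeasureTheory Set

noncomputable section

local notation "cj" => starRingEnd ℂ

def Fq (u v : ℝ × ℝ → Fin 2 → ℂ) : ℝ × ℝ → ℂ :=
  fun z => u z 0 * cj (v z 0) + u z 1 * cj (v z 1)
def Gq (u v : ℝ × ℝ → Fin 2 → ℂ) : ℝ × ℝ → ℂ :=
  fun z => Complex.I * (u z 1 * cj (v z 0) - u z 0 * cj (v z 1))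
def Ftq (T : ℝ) (u v : ℝ × ℝ → Fin 2 → ℂ) : ℝ × ℝ → ℂ := fun z =>
  (fderivWithin ℝ u (Sq T) z (0, 1) 0 * cj (v z 0)
    + u z 0 * cj (fderivWithin ℝ v (Sq T) z (0, 1) 0))
  + (fderivWithin ℝ u (Sq T) z (0, 1) 1 * cj (v z 1)
    + u z 1 * cj (fderivWithin ℝ v (Sq T) z (0, 1) 1))
def Gxq (T : ℝ) (u v : ℝ × ℝ → Fin 2 → ℂ) : ℝ × ℝ → ℂ := fun z =>
  Complex.I * ((fderivWithin ℝ u (Sq T) z (1, 0) 1 * cj (v z 0)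
      + u z 1 * cj (fderivWithin ℝ v (Sq T) z (1, 0) 0))
    - (fderivWithin ℝ u (Sq T) z (1, 0) 0 * cj (v z 1)
      + u z 0 * cj (fderivWithin ℝ v (Sq T) z (1, 0) 1)))

lemma sliceT {T : ℝ} {w : ℝ × ℝ → Fin 2 → ℂ} {L : (ℝ × ℝ) →L[ℝ] (Fin 2 → ℂ)} {x t : ℝ}
    (hx : x ∈ Icc (0:ℝ) T) (hw : HasFDerivWithinAt w L (Sq T) (x, t)) (i : Fin 2) :
    HasDerivWithinAt (fun τ => w (x, τ) i) (L (0, 1) i) (Icc (0:ℝ) T) t := by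
  have hc : HasDerivAt (fun τ : ℝ => ((x, τ) : ℝ × ℝ)) ((0:ℝ), (1:ℝ)) t :=
    (hasDerivAt_const t x).prodMk (hasDerivAt_id t)
  have h1 : HasDerivWithinAt (fun τ => w (x, τ)) (L (0, 1)) (Icc (0:ℝ) T) t :=
    hw.comp_hasDerivWithinAt t hc.hasDerivWithinAt fun τ hτ => ⟨hx, hτ⟩
  exact ((ContinuousLinearMap.proj (R := ℝ) (φ := fun _ : Fin 2 => ℂ) i).hasFDerivAt).comp_hasDerivWithinAt t h1

lemma sliceX {T : ℝ} {w : ℝ × ℝ → Fin 2 → ℂ} {L : (ℝ × ℝ) →L[ℝ] (Fin 2 → ℂ)} {x t : ℝ}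
    (ht : t ∈ Icc (0:ℝ) T) (hw : HasFDerivWithinAt w L (Sq T) (x, t)) (i : Fin 2) :
    HasDerivWithinAt (fun ξ => w (ξ, t) i) (L (1, 0) i) (Icc (0:ℝ) T) x := by
  have hc : HasDerivAt (fun ξ : ℝ => ((ξ, t) : ℝ × ℝ)) ((1:ℝ), (0:ℝ)) x :=
    (hasDerivAt_id x).prodMk (hasDerivAt_const x t)
  have h1 : HasDerivWithinAt (fun ξ => w (ξ, t)) (L (1, 0)) (Icc (0:ℝ) T) x :=
    hw.comp_hasDerivWithinAt x hc.hasDerivWithinAt fun ξ (hξ : ξ ∈ Icc (0:ℝ) T) => (⟨hξ, ht⟩ : (ξ, t) ∈ Sq T)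
  exact ((ContinuousLinearMap.proj (R := ℝ) (φ := fun _ : Fin 2 => ℂ) i).hasFDerivAt).comp_hasDerivWithinAt x h1

lemma FtDeriv {T : ℝ} {u v : ℝ × ℝ → Fin 2 → ℂ}
    (hud : ∀ z ∈ Sq T, HasFDerivWithinAt u (fderivWithin ℝ u (Sq T) z) (Sq T) z)
    (hvd : ∀ z ∈ Sq T, HasFDerivWithinAt v (fderivWithin ℝ v (Sq T) z) (Sq T) z)
    {x t : ℝ} (hx : x ∈ Icc (0:ℝ) T) (ht : t ∈ Icc (0:ℝ) T) :
    HasDerivWithinAt (fun τ => Fq u v (x, τ)) (Ftq T u v (x, t)) (Icc (0:ℝ) T) t := by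
  have hz : (x, t) ∈ Sq T := ⟨hx, ht⟩
  have h := ((sliceT hx (hud _ hz) 0).mul (sliceT hx (hvd _ hz) 0).star).add
    ((sliceT hx (hud _ hz) 1).mul (sliceT hx (hvd _ hz) 1).star)
  simpa only [Fq, Ftq, RCLike.star_def, Pi.mul_def, Pi.add_def] using h

lemma GxDeriv {T : ℝ} {u v : ℝ × ℝ → Fin 2 → ℂ}
    (hud : ∀ z ∈ Sq T, HasFDerivWithinAt u (fderivWithin ℝ u (Sq T) z) (Sq T) z)
    (hvd : ∀ z ∈ Sq T, HasFDerivWithinAt v (fderivWithin ℝ v (Sq T) z) (Sq T) z)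
    {x t : ℝ} (hx : x ∈ Icc (0:ℝ) T) (ht : t ∈ Icc (0:ℝ) T) :
    HasDerivWithinAt (fun ξ => Gq u v (ξ, t)) (Gxq T u v (x, t)) (Icc (0:ℝ) T) x := by
  have hz : (x, t) ∈ Sq T := ⟨hx, ht⟩
  have h := (((sliceX ht (hud _ hz) 1).mul (sliceX ht (hvd _ hz) 0).star).sub
    ((sliceX ht (hud _ hz) 0).mul (sliceX ht (hvd _ hz) 1).star)).const_mul Complex.I
  simpa only [Gq, Gxq, RCLike.star_def, Pi.mul_apply, Pi.sub_apply] using h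

lemma FtGx {T : ℝ} {p q : ℝ → ℝ} {u v : ℝ × ℝ → Fin 2 → ℂ}
    (hueq : DiracOn p q (Sq T) u) (hveq : DiracOn p q (Sq T) v)
    {z : ℝ × ℝ} (hz : z ∈ Sq T) : Ftq T u v z = Gxq T u v z := by
  have h1 := hueq z hz
  have h2 := hveq z hz
  have e10 := congrFun h1 0
  have e11 := congrFun h1 1
  have e20 := congrFun h2 0
  have e21 := congrFun h2 1
  simp only [Pi.add_apply, Pi.smul_apply, Pi.zero_apply, smul_eq_mul, Jmat, Vmat,
    Matrix.mulVec, dotProduct, Fin.sum_univ_two, Matrix.of_apply, Matrix.cons_val', Matrix.cons_val_zero,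
    Matrix.cons_val_one, Matrix.head_cons, Matrix.empty_val', Matrix.cons_val_fin_one,
    Matrix.head_fin_const] at e10 e11 e20 e21
  have ce20 := congrArg cj e20
  have ce21 := congrArg cj e21
  simp only [map_add, map_mul, map_zero, map_one, map_neg, Complex.conj_I, Complex.conj_ofReal]
    at ce20 ce21
  simp only [Ftq, Gxq]
  linear_combination (-Complex.I * cj (v z 0)) * e10 + (-Complex.I * cj (v z 1)) * e11
    + (Complex.I * u z 0) * ce20 + (Complex.I * u z 1) * ce21
    + ((fderivWithin ℝ u (Sq T) z) (0, 1) 0 * cj (v z 0)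
      + u z 0 * cj ((fderivWithin ℝ v (Sq T) z) (0, 1) 0)
      + (fderivWithin ℝ u (Sq T) z) (0, 1) 1 * cj (v z 1)
      + u z 1 * cj ((fderivWithin ℝ v (Sq T) z) (0, 1) 1)) * Complex.I_sq

lemma triZero {T : ℝ} (hT : 0 < T) {w : ℝ × ℝ → Fin 2 → ℂ} (hw : ContinuousOn w (Sq T))
    (h0 : ∀ z ∈ Sq T, z.2 < z.1 → w z = 0) : ∀ z ∈ Sq T, z.2 ≤ z.1 → w z = 0 := by
  rintro ⟨x, t⟩ ⟨hx, ht⟩ hle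
  simp only at hle
  rcases lt_or_eq_of_le hle with h | h
  · exact h0 _ ⟨hx, ht⟩ h
  · subst h
    have key : ∀ a : ℕ → ℝ × ℝ, (∀ n, a n ∈ Sq T) → (∀ n, (a n).2 < (a n).1) →
        Filter.Tendsto a Filter.atTop (nhds (t, t)) → w (t, t) = 0 := by
      intro a hmem hlt hlim
      have h1 : Filter.Tendsto a Filter.atTop (nhdsWithin (t, t) (Sq T)) :=
        tendsto_nhdsWithin_iff.2 ⟨hlim, Filter.Eventually.of_forall hmem⟩
      have h2 := (hw _ ⟨hx, hx⟩).tendsto.comp h1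
      have h3 : (w ∘ a) = fun _ => (0 : Fin 2 → ℂ) := funext fun n => h0 _ (hmem n) (hlt n)
      rw [h3] at h2
      exact (tendsto_nhds_unique h2 tendsto_const_nhds)
    by_cases ht0 : t = 0
    · subst ht0
      refine key (fun n => (min T (1 / (n + 1)), 0)) (fun n => ⟨⟨?_, min_le_left _ _⟩, ⟨le_rfl, hT.le⟩⟩)
        (fun n => lt_min hT (by positivity)) ?_
      · exact le_min hT.le (by positivity)
      · have h4 : Filter.Tendsto (fun n : ℕ => min T (1 / (n + 1 : ℝ))) Filter.atTop (nhds 0) := by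
          have := (tendsto_const_nhds (x := T) (f := Filter.atTop (α := ℕ))).min
            tendsto_one_div_add_atTop_nhds_zero_nat
          rwa [min_eq_right hT.le] at this
        exact h4.prodMk_nhds tendsto_const_nhds
    · have htpos : 0 < t := lt_of_le_of_ne hx.1 (Ne.symm ht0)
      refine key (fun n => (t, t - t / (n + 1))) (fun n => ⟨hx, ⟨?_, ?_⟩⟩) (fun n => ?_) ?_
      · have : t / (n + 1 : ℝ) ≤ t := div_le_self htpos.le (by norm_num)
        simpa using this
      · have : 0 ≤ t / (n + 1 : ℝ) := by positivity
        simp only []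
        linarith [hx.2]
      · have : 0 < t / (n + 1 : ℝ) := by positivity
        simp only []
        linarith
      · have h4 : Filter.Tendsto (fun n : ℕ => t - t / (n + 1)) Filter.atTop (nhds t) := by
          have h5 : Filter.Tendsto (fun n : ℕ => t * (1 / (n + 1 : ℝ))) Filter.atTop (nhds (t * 0)) :=
            tendsto_one_div_add_atTop_nhds_zero_nat.const_mul t
          simp only [mul_one_div, mul_zero] at h5
          simpa using tendsto_const_nhds.sub h5
        exact tendsto_const_nhds.prodMk_nhds h4

lemma FTCslice {T : ℝ} (hT' : 0 ≤ T) {φ φ' : ℝ → ℂ}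
    (hc : ContinuousOn φ (Icc 0 T))
    (hd : ∀ s ∈ Icc (0:ℝ) T, HasDerivWithinAt φ (φ' s) (Icc (0:ℝ) T) s)
    (hi : IntervalIntegrable φ' volume 0 T) : ∫ s in (0:ℝ)..T, φ' s = φ T - φ 0 :=
  intervalIntegral.integral_eq_sub_of_hasDeriv_right_of_le hT' hc
    (fun s hs => ((hd s (Ioo_subset_Icc_self hs)).hasDerivAt
      (Icc_mem_nhds hs.1 hs.2)).hasDerivWithinAt) hi

lemma bddInt {α : Type*} [MeasurableSpace α] {μ : Measure α} {h : α → ℂ}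
    (hm : AEStronglyMeasurable h μ) {C : ℝ} (hb : ∀ x, ‖h x‖ ≤ C) {s : Set α} (hs : μ s < ⊤) :
    IntegrableOn h s μ :=
  Integrable.mono' (integrableOn_const hs.ne) hm.restrict (Filter.Eventually.of_forall hb)

lemma bddIntervalInt {h : ℝ → ℂ} (hm : AEStronglyMeasurable h volume) {C : ℝ}
    (hb : ∀ x, ‖h x‖ ≤ C) (a b : ℝ) : IntervalIntegrable h volume a b := by
  rw [intervalIntegrable_iff]
  exact bddInt hm hb measure_Ioc_lt_top

lemma convTrunc {T : ℝ} {r f rr ff : ℝ → ℂ}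
    (hrm : AEStronglyMeasurable rr volume) (hfm : AEStronglyMeasurable ff volume)
    {Cr Cf : ℝ} (hCr : ∀ x, ‖rr x‖ ≤ Cr) (hCf : ∀ x, ‖ff x‖ ≤ Cf)
    (hre : ∀ x ≤ T, rr x = r x) (hrneg : ∀ x < (0:ℝ), rr x = 0)
    (hfe : EqOn ff f (Icc 0 T)) {t : ℝ} (ht : t ∈ Icc (0:ℝ) T) :
    ∫ s in Icc (0:ℝ) T, rr (t - s) * ff s = ∫ s in (0:ℝ)..t, r (t - s) * f s := by
  have hT' : (0:ℝ) ≤ T := le_trans ht.1 ht.2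
  have hm : AEStronglyMeasurable (fun s => rr (t - s) * ff s) volume :=
    (hrm.comp_quasiMeasurePreserving
      (quasiMeasurePreserving_sub_left volume t)).mul hfm
  have hb : ∀ s, ‖rr (t - s) * ff s‖ ≤ |Cr| * |Cf| := by
    intro s; rw [norm_mul]
    exact mul_le_mul (le_trans (hCr _) (le_abs_self _)) (le_trans (hCf _) (le_abs_self _))
      (norm_nonneg _) (abs_nonneg _)
  have h1 : IntervalIntegrable (fun s => rr (t - s) * ff s) volume 0 t := bddIntervalInt hm hb 0 t
  have h2 : IntervalIntegrable (fun s => rr (t - s) * ff s) volume t T := bddIntervalInt hm hb t T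
  calc ∫ s in Icc (0:ℝ) T, rr (t - s) * ff s = ∫ s in (0:ℝ)..T, rr (t - s) * ff s := by
        rw [intervalIntegral.integral_of_le hT', ← integral_Icc_eq_integral_Ioc]
    _ = (∫ s in (0:ℝ)..t, rr (t - s) * ff s) + ∫ s in t..T, rr (t - s) * ff s :=
        (intervalIntegral.integral_add_adjacent_intervals h1 h2).symm
    _ = ∫ s in (0:ℝ)..t, r (t - s) * f s := by
        have hz : (∫ s in t..T, rr (t - s) * ff s) = 0 := by
          rw [intervalIntegral.integral_of_le ht.2,
            setIntegral_congr_fun measurableSet_Ioc (g := fun _ => (0:ℂ))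
              (fun s hs => by rw [hrneg _ (by linarith [hs.1] : t - s < 0), zero_mul])]
          simp
        rw [hz, add_zero]
        apply intervalIntegral.integral_congr
        rw [uIcc_of_le ht.1]
        intro s hs
        show rr (t - s) * ff s = r (t - s) * f s
        rw [hre _ (by linarith [hs.1, ht.2] : t - s ≤ T), hfe ⟨hs.1, le_trans hs.2 ht.2⟩]

lemma indBound {h : ℝ → ℂ} {s : Set ℝ} (hs : IsCompact s) (hc : ContinuousOn h s) :
    ∃ C, ∀ x, ‖s.indicator h x‖ ≤ C := by
  obtain ⟨C, hC⟩ := hs.exists_bound_of_continuousOn hc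
  refine ⟨max C 0, fun x => ?_⟩
  by_cases hx : x ∈ s
  · rw [indicator_of_mem hx]; exact le_max_of_le_left (hC x hx)
  · rw [indicator_of_notMem hx]; simpa using le_max_right C 0

lemma normMul3 {a b c : ℂ} {Ca Cb Cc : ℝ} (ha : ‖a‖ ≤ Ca) (hb : ‖b‖ ≤ Cb) (hc : ‖c‖ ≤ Cc) :
    ‖a * b * c‖ ≤ |Ca| * |Cb| * |Cc| := by
  rw [norm_mul, norm_mul]
  exact mul_le_mul (mul_le_mul (ha.trans (le_abs_self _)) (hb.trans (le_abs_self _))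
    (norm_nonneg _) (abs_nonneg _)) (hc.trans (le_abs_self _)) (norm_nonneg _) (by positivity)

lemma prodInt {T : ℝ} {h : ℝ × ℝ → ℂ} (hm : AEStronglyMeasurable h ((volume : Measure ℝ).prod volume))
    {C : ℝ} (hb : ∀ z, ‖h z‖ ≤ C) :
    Integrable h ((volume.restrict (Icc (0:ℝ) T)).prod (volume.restrict (Icc (0:ℝ) T))) := by
  rw [Measure.prod_restrict]
  refine bddInt hm hb ?_
  rw [Measure.prod_prod]
  exact ENNReal.mul_lt_top measure_Icc_lt_top measure_Icc_lt_top

/-- Representation of the connecting operator via the response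
function: `(C^T f, g) = 2(f,g) - i ∬ [r(t-s) - conj r(s-t)] f(s) conj g(t)`. -/

theorem stmt6 (T : ℝ) (hT : 0 < T) (p q : ℝ → ℝ)
    (hp : ContinuousOn p (Icc 0 T)) (hq : ContinuousOn q (Icc 0 T))
    (r : ℝ → ℂ) (hr : ContinuousOn r (Icc 0 T)) (hr0 : ∀ t < (0 : ℝ), r t = 0)
    (f g : ℝ → ℂ)
    (hf : ContDiffOn ℝ 1 f (Icc 0 T)) (hf0 : f 0 = 0)
    (hf'0 : derivWithin f (Icc 0 T) 0 = 0)
    (hg : ContDiffOn ℝ 1 g (Icc 0 T)) (hg0 : g 0 = 0)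
    (hg'0 : derivWithin g (Icc 0 T) 0 = 0)
    (u v : ℝ × ℝ → Fin 2 → ℂ)
    (hu : ContDiffOn ℝ 1 u (Sq T)) (hv : ContDiffOn ℝ 1 v (Sq T))
    (hueq : DiracOn p q (Sq T) u) (hveq : DiracOn p q (Sq T) v)
    (hut : ∀ z ∈ Sq T, z.2 < z.1 → u z = 0)
    (hvt : ∀ z ∈ Sq T, z.2 < z.1 → v z = 0)
    (hub1 : ∀ t ∈ Icc (0 : ℝ) T, u (0, t) 0 = f t)
    (hvb1 : ∀ t ∈ Icc (0 : ℝ) T, v (0, t) 0 = g t)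
    (hub2 : ∀ t ∈ Icc (0 : ℝ) T,
      u (0, t) 1 = Complex.I * f t + ∫ s in (0 : ℝ)..t, r (t - s) * f s)
    (hvb2 : ∀ t ∈ Icc (0 : ℝ) T,
      v (0, t) 1 = Complex.I * g t + ∫ s in (0 : ℝ)..t, r (t - s) * g s) :
    (∫ x in (0 : ℝ)..T,
        (u (x, T) 0 * (starRingEnd ℂ) (v (x, T) 0) +
          u (x, T) 1 * (starRingEnd ℂ) (v (x, T) 1)))
      = 2 * (∫ t in (0 : ℝ)..T, f t * (starRingEnd ℂ) (g t))
        - Complex.I *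
          ∫ t in (0 : ℝ)..T, ∫ s in (0 : ℝ)..T,
            (r (t - s) - (starRingEnd ℂ) (r (s - t))) * f s * (starRingEnd ℂ) (g t) := by
  have hT' : (0:ℝ) ≤ T := hT.le
  -- ## analytic setup
  have hSu : UniqueDiffOn ℝ (Sq T) := by
    apply uniqueDiffOn_convex ((convex_Icc (0:ℝ) T).prod (convex_Icc (0:ℝ) T))
    rw [interior_prod_eq, interior_Icc]
    exact ⟨(T/2, T/2), ⟨by positivity, by linarith⟩, ⟨by positivity, by linarith⟩⟩
  have hud : ∀ z ∈ Sq T, HasFDerivWithinAt u (fderivWithin ℝ u (Sq T) z) (Sq T) z :=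
    fun z hz => (hu.differentiableOn one_ne_zero z hz).hasFDerivWithinAt
  have hvd : ∀ z ∈ Sq T, HasFDerivWithinAt v (fderivWithin ℝ v (Sq T) z) (Sq T) z :=
    fun z hz => (hv.differentiableOn one_ne_zero z hz).hasFDerivWithinAt
  have hconj : Continuous (starRingEnd ℂ) := Complex.continuous_conj
  have hcu : ∀ i, ContinuousOn (fun z => u z i) (Sq T) :=
    fun i => (continuous_apply i).comp_continuousOn hu.continuousOn
  have hcv : ∀ i, ContinuousOn (fun z => v z i) (Sq T) :=
    fun i => (continuous_apply i).comp_continuousOn hv.continuousOn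
  have hcdu : ∀ (w : ℝ × ℝ) (i : Fin 2),
      ContinuousOn (fun z => fderivWithin ℝ u (Sq T) z w i) (Sq T) :=
    fun w i => (continuous_apply i).comp_continuousOn
      (((hu.continuousOn_fderivWithin hSu le_rfl)).clm_apply continuousOn_const)
  have hcdv : ∀ (w : ℝ × ℝ) (i : Fin 2),
      ContinuousOn (fun z => fderivWithin ℝ v (Sq T) z w i) (Sq T) :=
    fun w i => (continuous_apply i).comp_continuousOn
      (((hv.continuousOn_fderivWithin hSu le_rfl)).clm_apply continuousOn_const)
  have hFc : ContinuousOn (Fq u v) (Sq T) :=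
    ((hcu 0).mul (hconj.comp_continuousOn (hcv 0))).add
      ((hcu 1).mul (hconj.comp_continuousOn (hcv 1)))
  have hGc : ContinuousOn (Gq u v) (Sq T) :=
    continuousOn_const.mul (((hcu 1).mul (hconj.comp_continuousOn (hcv 0))).sub
      ((hcu 0).mul (hconj.comp_continuousOn (hcv 1))))
  have hFtc : ContinuousOn (Ftq T u v) (Sq T) :=
    (((hcdu (0,1) 0).mul (hconj.comp_continuousOn (hcv 0))).add
      ((hcu 0).mul (hconj.comp_continuousOn (hcdv (0,1) 0)))).add
      (((hcdu (0,1) 1).mul (hconj.comp_continuousOn (hcv 1))).add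
        ((hcu 1).mul (hconj.comp_continuousOn (hcdv (0,1) 1))))
  have hGxc : ContinuousOn (Gxq T u v) (Sq T) :=
    continuousOn_const.mul
      ((((hcdu (1,0) 1).mul (hconj.comp_continuousOn (hcv 0))).add
        ((hcu 1).mul (hconj.comp_continuousOn (hcdv (1,0) 0)))).sub
       (((hcdu (1,0) 0).mul (hconj.comp_continuousOn (hcv 1))).add
        ((hcu 0).mul (hconj.comp_continuousOn (hcdv (1,0) 1)))))
  -- ## FTC in each direction
  have key1 : ∀ x ∈ Icc (0:ℝ) T,
      (∫ t in (0:ℝ)..T, Ftq T u v (x, t)) = Fq u v (x, T) - Fq u v (x, 0) := by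
    intro x hx
    refine FTCslice hT' ?_ (fun t ht => FtDeriv hud hvd hx ht) ?_
    · exact hFc.comp (Continuous.prodMk_right x).continuousOn (fun τ hτ => ⟨hx, hτ⟩)
    · apply ContinuousOn.intervalIntegrable
      rw [uIcc_of_le hT']
      exact hFtc.comp (Continuous.prodMk_right x).continuousOn (fun τ hτ => ⟨hx, hτ⟩)
  have key2 : ∀ t ∈ Icc (0:ℝ) T,
      (∫ x in (0:ℝ)..T, Gxq T u v (x, t)) = Gq u v (T, t) - Gq u v (0, t) := by
    intro t ht
    refine FTCslice hT' ?_ (fun x hx => GxDeriv hud hvd hx ht) ?_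
    · exact hGc.comp (continuous_id.prodMk continuous_const).continuousOn
        (fun ξ hξ => ⟨hξ, ht⟩)
    · apply ContinuousOn.intervalIntegrable
      rw [uIcc_of_le hT']
      exact hGxc.comp (continuous_id.prodMk continuous_const).continuousOn
        (fun ξ hξ => ⟨hξ, ht⟩)
  -- ## vanishing on the closed lower triangle
  have huz := triZero hT hu.continuousOn hut
  have hF0 : ∀ x ∈ Icc (0:ℝ) T, Fq u v (x, 0) = 0 := by
    intro x hx
    have h := huz (x, 0) ⟨hx, ⟨le_rfl, hT'⟩⟩ hx.1
    simp [Fq, h]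
  have hGT : ∀ t ∈ Icc (0:ℝ) T, Gq u v (T, t) = 0 := by
    intro t ht
    have h := huz (T, t) ⟨⟨hT', le_rfl⟩, ht⟩ ht.2
    simp [Gq, h]
  -- ## boundary identity
  have hbd : ∀ t ∈ Icc (0:ℝ) T, Gq u v (0, t) + 2 * (f t * (starRingEnd ℂ) (g t)) =
      Complex.I * ((∫ s in (0:ℝ)..t, r (t - s) * f s) * (starRingEnd ℂ) (g t)
        - f t * (starRingEnd ℂ) (∫ s in (0:ℝ)..t, r (t - s) * g s)) := by
    intro t ht
    simp only [Gq, hub1 t ht, hub2 t ht, hvb1 t ht, hvb2 t ht, map_add, map_mul, Complex.conj_I]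
    linear_combination (2 * (f t * (starRingEnd ℂ) (g t))) * Complex.I_sq
  -- ## Fubini for Gxq on the square
  have hGxI : Integrable (Gxq T u v)
      ((volume.restrict (Icc (0:ℝ) T)).prod (volume.restrict (Icc (0:ℝ) T))) := by
    have hme : (volume.restrict (Icc (0:ℝ) T)).prod (volume.restrict (Icc (0:ℝ) T))
        = (volume : Measure (ℝ × ℝ)).restrict (Icc (0:ℝ) T ×ˢ Icc (0:ℝ) T) := by
      rw [Measure.prod_restrict, ← Measure.volume_eq_prod]
    rw [hme]
    exact hGxc.integrableOn_compact (isCompact_Icc.prod isCompact_Icc)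
  have swapG : (∫ x in Icc (0:ℝ) T, ∫ t in Icc (0:ℝ) T, Gxq T u v (x, t))
      = ∫ t in Icc (0:ℝ) T, ∫ x in Icc (0:ℝ) T, Gxq T u v (x, t) :=
    integral_integral_swap hGxI
  -- ## indicator extensions
  have hrre : ∀ x ≤ T, (Icc (0:ℝ) T).indicator r x = r x := by
    intro x hx
    by_cases h : 0 ≤ x
    · exact indicator_of_mem (show x ∈ Icc (0:ℝ) T from ⟨h, hx⟩) r
    · rw [indicator_of_notMem (fun hc => h hc.1), hr0 x (lt_of_not_ge h)]
  have hrrneg : ∀ x < (0:ℝ), (Icc (0:ℝ) T).indicator r x = 0 :=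
    fun x hx => indicator_of_notMem (fun hc => absurd hc.1 (not_le.2 hx)) r
  have hffe : EqOn ((Icc (0:ℝ) T).indicator f) f (Icc 0 T) := fun x hx => indicator_of_mem hx f
  have hgge : EqOn ((Icc (0:ℝ) T).indicator g) g (Icc 0 T) := fun x hx => indicator_of_mem hx g
  set rr := (Icc (0:ℝ) T).indicator r with hrr_def
  set ff := (Icc (0:ℝ) T).indicator f with hff_def
  set gg := (Icc (0:ℝ) T).indicator g with hgg_def
  have hrrm : AEStronglyMeasurable rr volume := by
    rw [hrr_def]
    exact (aestronglyMeasurable_indicator_iff measurableSet_Icc).2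
      (hr.aestronglyMeasurable measurableSet_Icc)
  have hffm : AEStronglyMeasurable ff volume := by
    rw [hff_def]
    exact (aestronglyMeasurable_indicator_iff measurableSet_Icc).2
      (hf.continuousOn.aestronglyMeasurable measurableSet_Icc)
  have hggm : AEStronglyMeasurable gg volume := by
    rw [hgg_def]
    exact (aestronglyMeasurable_indicator_iff measurableSet_Icc).2
      (hg.continuousOn.aestronglyMeasurable measurableSet_Icc)
  obtain ⟨Cr, hCr⟩ : ∃ C, ∀ x, ‖rr x‖ ≤ C := hrr_def ▸ indBound isCompact_Icc hr
  obtain ⟨Cf, hCf⟩ : ∃ C, ∀ x, ‖ff x‖ ≤ C := hff_def ▸ indBound isCompact_Icc hf.continuousOn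
  obtain ⟨Cg, hCg⟩ : ∃ C, ∀ x, ‖gg x‖ ≤ C := hgg_def ▸ indBound isCompact_Icc hg.continuousOn
  -- ## the three product-integrable kernels
  have mSub : AEStronglyMeasurable (fun z : ℝ × ℝ => rr (z.1 - z.2))
      ((volume : Measure ℝ).prod volume) :=
    hrrm.comp_quasiMeasurePreserving (quasiMeasurePreserving_sub volume volume)
  have mSub' : AEStronglyMeasurable (fun z : ℝ × ℝ => rr (z.2 - z.1))
      ((volume : Measure ℝ).prod volume) :=
    hrrm.comp_quasiMeasurePreserving ((quasiMeasurePreserving_sub volume volume).comp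
      Measure.measurePreserving_swap.quasiMeasurePreserving)
  have hK1i : Integrable (Function.uncurry fun t s => rr (t - s) * ff s * (starRingEnd ℂ) (gg t))
      ((volume.restrict (Icc (0:ℝ) T)).prod (volume.restrict (Icc (0:ℝ) T))) := by
    refine prodInt ((mSub.mul hffm.comp_snd).mul
      (hconj.comp_aestronglyMeasurable hggm.comp_fst)) (C := |Cr| * |Cf| * |Cg|) ?_
    intro z
    refine normMul3 (hCr _) (hCf _) ?_
    rw [RCLike.norm_conj]; exact hCg _
  have hK2i : Integrable (Function.uncurry fun t s =>
        (starRingEnd ℂ) (rr (s - t)) * ff s * (starRingEnd ℂ) (gg t))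
      ((volume.restrict (Icc (0:ℝ) T)).prod (volume.restrict (Icc (0:ℝ) T))) := by
    refine prodInt (((hconj.comp_aestronglyMeasurable mSub').mul hffm.comp_snd).mul
      (hconj.comp_aestronglyMeasurable hggm.comp_fst)) (C := |Cr| * |Cf| * |Cg|) ?_
    intro z
    refine normMul3 ?_ (hCf _) ?_
    · rw [RCLike.norm_conj]; exact hCr _
    · rw [RCLike.norm_conj]; exact hCg _
  have hK3i : Integrable (Function.uncurry fun t s =>
        (starRingEnd ℂ) (rr (t - s)) * ff t * (starRingEnd ℂ) (gg s))
      ((volume.restrict (Icc (0:ℝ) T)).prod (volume.restrict (Icc (0:ℝ) T))) := by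
    refine prodInt (((hconj.comp_aestronglyMeasurable mSub).mul hffm.comp_fst).mul
      (hconj.comp_aestronglyMeasurable hggm.comp_snd)) (C := |Cr| * |Cf| * |Cg|) ?_
    intro z
    refine normMul3 ?_ (hCf _) ?_
    · rw [RCLike.norm_conj]; exact hCr _
    · rw [RCLike.norm_conj]; exact hCg _
  -- section integrability (in the inner variable, for fixed t)
  have hSec1 : ∀ t : ℝ, IntegrableOn (fun s => rr (t - s) * ff s * (starRingEnd ℂ) (gg t))
      (Icc (0:ℝ) T) volume := by
    intro t
    refine bddInt (((hrrm.comp_quasiMeasurePreserving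
      (quasiMeasurePreserving_sub_left volume t)).mul hffm).mul
        aestronglyMeasurable_const) (C := |Cr| * |Cf| * |Cg|) ?_ measure_Icc_lt_top
    intro s
    refine normMul3 (hCr _) (hCf _) ?_
    rw [RCLike.norm_conj]; exact hCg _
  have hSec2 : ∀ t : ℝ, IntegrableOn (fun s => (starRingEnd ℂ) (rr (s - t)) * ff s *
      (starRingEnd ℂ) (gg t)) (Icc (0:ℝ) T) volume := by
    intro t
    have hm : AEStronglyMeasurable (fun s => rr (s - t)) volume :=
      hrrm.comp_quasiMeasurePreserving (measurePreserving_sub_right volume t).quasiMeasurePreserving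
    refine bddInt (((hconj.comp_aestronglyMeasurable hm).mul hffm).mul
      aestronglyMeasurable_const) (C := |Cr| * |Cf| * |Cg|) ?_ measure_Icc_lt_top
    intro s
    refine normMul3 ?_ (hCf _) ?_
    · rw [RCLike.norm_conj]; exact hCr _
    · rw [RCLike.norm_conj]; exact hCg _
  -- ## inner integral computations
  have step_b : ∀ t ∈ Icc (0:ℝ) T,
      (∫ s in Icc (0:ℝ) T, rr (t - s) * ff s * (starRingEnd ℂ) (gg t))
        = (∫ s in (0:ℝ)..t, r (t - s) * f s) * (starRingEnd ℂ) (g t) := by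
    intro t ht
    rw [integral_mul_const, convTrunc hrrm hffm hCr hCf hrre hrrneg hffe ht, hgge ht]
  have step_c : ∀ t ∈ Icc (0:ℝ) T,
      (∫ s in Icc (0:ℝ) T, (starRingEnd ℂ) (rr (t - s)) * ff t * (starRingEnd ℂ) (gg s))
        = f t * (starRingEnd ℂ) (∫ s in (0:ℝ)..t, r (t - s) * g s) := by
    intro t ht
    have hpt : ∀ s : ℝ, (starRingEnd ℂ) (rr (t - s)) * ff t * (starRingEnd ℂ) (gg s)
        = ff t * (starRingEnd ℂ) (rr (t - s) * gg s) := by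
      intro s; rw [map_mul]; ring
    rw [setIntegral_congr_fun measurableSet_Icc (fun s _ => hpt s), integral_const_mul,
      integral_conj, convTrunc hrrm hggm hCr hCg hrre hrrneg hgge ht, hffe ht]
  -- ## the big convolution identity
  have keyPhi : (∫ t in Icc (0:ℝ) T, (Gq u v (0, t) + 2 * (f t * (starRingEnd ℂ) (g t))))
      = Complex.I * ∫ t in (0:ℝ)..T, ∫ s in (0:ℝ)..T,
          (r (t - s) - (starRingEnd ℂ) (r (s - t))) * f s * (starRingEnd ℂ) (g t) := by
    have hps1 : Integrable (fun t => ∫ s in Icc (0:ℝ) T,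
        rr (t - s) * ff s * (starRingEnd ℂ) (gg t)) (volume.restrict (Icc (0:ℝ) T)) :=
      hK1i.integral_prod_left
    have hps2 : Integrable (fun t => ∫ s in Icc (0:ℝ) T,
        (starRingEnd ℂ) (rr (s - t)) * ff s * (starRingEnd ℂ) (gg t))
        (volume.restrict (Icc (0:ℝ) T)) := hK2i.integral_prod_left
    have hps3 : Integrable (fun t => ∫ s in Icc (0:ℝ) T,
        (starRingEnd ℂ) (rr (t - s)) * ff t * (starRingEnd ℂ) (gg s))
        (volume.restrict (Icc (0:ℝ) T)) := hK3i.integral_prod_left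
    have e2 : (∫ t in Icc (0:ℝ) T, ∫ s in Icc (0:ℝ) T,
        (starRingEnd ℂ) (rr (t - s)) * ff t * (starRingEnd ℂ) (gg s))
        = ∫ t in Icc (0:ℝ) T, ∫ s in Icc (0:ℝ) T,
            (starRingEnd ℂ) (rr (s - t)) * ff s * (starRingEnd ℂ) (gg t) :=
      integral_integral_swap hK3i
    calc (∫ t in Icc (0:ℝ) T, (Gq u v (0, t) + 2 * (f t * (starRingEnd ℂ) (g t))))
        = ∫ t in Icc (0:ℝ) T, Complex.I *
            ((∫ s in Icc (0:ℝ) T, rr (t - s) * ff s * (starRingEnd ℂ) (gg t))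
              - ∫ s in Icc (0:ℝ) T, (starRingEnd ℂ) (rr (t - s)) * ff t *
                  (starRingEnd ℂ) (gg s)) := by
          apply setIntegral_congr_fun measurableSet_Icc
          intro t ht
          show Gq u v (0, t) + 2 * (f t * (starRingEnd ℂ) (g t))
            = Complex.I * ((∫ s in Icc (0:ℝ) T, rr (t - s) * ff s * (starRingEnd ℂ) (gg t))
                - ∫ s in Icc (0:ℝ) T, (starRingEnd ℂ) (rr (t - s)) * ff t *
                    (starRingEnd ℂ) (gg s))
          rw [hbd t ht, step_b t ht, step_c t ht]
      _ = Complex.I * ((∫ t in Icc (0:ℝ) T, ∫ s in Icc (0:ℝ) T,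
              rr (t - s) * ff s * (starRingEnd ℂ) (gg t))
            - ∫ t in Icc (0:ℝ) T, ∫ s in Icc (0:ℝ) T,
                (starRingEnd ℂ) (rr (t - s)) * ff t * (starRingEnd ℂ) (gg s)) := by
          rw [integral_const_mul]
          congr 1
          exact integral_sub hps1 hps3
      _ = Complex.I * ((∫ t in Icc (0:ℝ) T, ∫ s in Icc (0:ℝ) T,
              rr (t - s) * ff s * (starRingEnd ℂ) (gg t))
            - ∫ t in Icc (0:ℝ) T, ∫ s in Icc (0:ℝ) T,
                (starRingEnd ℂ) (rr (s - t)) * ff s * (starRingEnd ℂ) (gg t)) := by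
          rw [e2]
      _ = Complex.I * ∫ t in Icc (0:ℝ) T,
            ((∫ s in Icc (0:ℝ) T, rr (t - s) * ff s * (starRingEnd ℂ) (gg t))
              - ∫ s in Icc (0:ℝ) T, (starRingEnd ℂ) (rr (s - t)) * ff s *
                  (starRingEnd ℂ) (gg t)) := by
          congr 1
          exact (integral_sub hps1 hps2).symm
      _ = Complex.I * ∫ t in (0:ℝ)..T, ∫ s in (0:ℝ)..T,
            (r (t - s) - (starRingEnd ℂ) (r (s - t))) * f s * (starRingEnd ℂ) (g t) := by
          congr 1
          rw [intervalIntegral.integral_of_le hT', ← integral_Icc_eq_integral_Ioc]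
          apply setIntegral_congr_fun measurableSet_Icc
          intro t ht
          show (∫ s in Icc (0:ℝ) T, rr (t - s) * ff s * (starRingEnd ℂ) (gg t))
              - (∫ s in Icc (0:ℝ) T, (starRingEnd ℂ) (rr (s - t)) * ff s *
                  (starRingEnd ℂ) (gg t))
            = ∫ s in (0:ℝ)..T, (r (t - s) - (starRingEnd ℂ) (r (s - t))) * f s *
                (starRingEnd ℂ) (g t)
          rw [intervalIntegral.integral_of_le hT', ← integral_Icc_eq_integral_Ioc,
            ← integral_sub (hSec1 t) (hSec2 t)]
          apply setIntegral_congr_fun measurableSet_Icc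
          intro s hs
          show rr (t - s) * ff s * (starRingEnd ℂ) (gg t)
              - (starRingEnd ℂ) (rr (s - t)) * ff s * (starRingEnd ℂ) (gg t)
            = (r (t - s) - (starRingEnd ℂ) (r (s - t))) * f s * (starRingEnd ℂ) (g t)
          rw [hrre _ (by linarith [ht.2, hs.1] : t - s ≤ T),
            hrre _ (by linarith [hs.2, ht.1] : s - t ≤ T), hffe hs, hgge ht]
          ring
  -- ## assembling everything
  have int1 : IntegrableOn (fun t => 2 * (f t * (starRingEnd ℂ) (g t))) (Icc (0:ℝ) T) volume :=
    (continuousOn_const.mul (hf.continuousOn.mul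
      (hconj.comp_continuousOn hg.continuousOn))).integrableOn_compact isCompact_Icc
  have int2 : IntegrableOn (fun t => Gq u v (0, t) + 2 * (f t * (starRingEnd ℂ) (g t)))
      (Icc (0:ℝ) T) volume :=
    ((hGc.comp (Continuous.prodMk_right (0:ℝ)).continuousOn
        (fun τ hτ => ⟨⟨le_rfl, hT'⟩, hτ⟩)).add
      (continuousOn_const.mul (hf.continuousOn.mul
        (hconj.comp_continuousOn hg.continuousOn)))).integrableOn_compact isCompact_Icc
  show (∫ x in (0:ℝ)..T, Fq u v (x, T))
      = 2 * (∫ t in (0:ℝ)..T, f t * (starRingEnd ℂ) (g t))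
        - Complex.I * ∫ t in (0:ℝ)..T, ∫ s in (0:ℝ)..T,
            (r (t - s) - (starRingEnd ℂ) (r (s - t))) * f s * (starRingEnd ℂ) (g t)
  calc (∫ x in (0:ℝ)..T, Fq u v (x, T))
      = ∫ x in Icc (0:ℝ) T, ∫ t in Icc (0:ℝ) T, Gxq T u v (x, t) := by
        rw [intervalIntegral.integral_of_le hT', ← integral_Icc_eq_integral_Ioc]
        apply setIntegral_congr_fun measurableSet_Icc
        intro x hx
        show Fq u v (x, T) = ∫ t in Icc (0:ℝ) T, Gxq T u v (x, t)
        have e1 : (∫ t in (0:ℝ)..T, Ftq T u v (x, t)) = Fq u v (x, T) := by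
          rw [key1 x hx, hF0 x hx, sub_zero]
        have e2 : (∫ t in (0:ℝ)..T, Ftq T u v (x, t))
            = ∫ t in (0:ℝ)..T, Gxq T u v (x, t) := by
          apply intervalIntegral.integral_congr
          rw [uIcc_of_le hT']
          exact fun t ht => FtGx hueq hveq ⟨hx, ht⟩
        rw [← e1, e2, intervalIntegral.integral_of_le hT', ← integral_Icc_eq_integral_Ioc]
    _ = ∫ t in Icc (0:ℝ) T, ∫ x in Icc (0:ℝ) T, Gxq T u v (x, t) := swapG
    _ = ∫ t in Icc (0:ℝ) T, (2 * (f t * (starRingEnd ℂ) (g t))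
          - (Gq u v (0, t) + 2 * (f t * (starRingEnd ℂ) (g t)))) := by
        apply setIntegral_congr_fun measurableSet_Icc
        intro t ht
        show (∫ x in Icc (0:ℝ) T, Gxq T u v (x, t))
          = 2 * (f t * (starRingEnd ℂ) (g t))
            - (Gq u v (0, t) + 2 * (f t * (starRingEnd ℂ) (g t)))
        have e3 : (∫ x in Icc (0:ℝ) T, Gxq T u v (x, t))
            = ∫ x in (0:ℝ)..T, Gxq T u v (x, t) := by
          rw [intervalIntegral.integral_of_le hT', integral_Icc_eq_integral_Ioc]
        rw [e3, key2 t ht, hGT t ht]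
        ring
    _ = (∫ t in Icc (0:ℝ) T, 2 * (f t * (starRingEnd ℂ) (g t)))
          - ∫ t in Icc (0:ℝ) T, (Gq u v (0, t) + 2 * (f t * (starRingEnd ℂ) (g t))) :=
        integral_sub int1 int2
    _ = 2 * (∫ t in (0:ℝ)..T, f t * (starRingEnd ℂ) (g t))
          - Complex.I * ∫ t in (0:ℝ)..T, ∫ s in (0:ℝ)..T,
              (r (t - s) - (starRingEnd ℂ) (r (s - t))) * f s * (starRingEnd ℂ) (g t) := by
        have e4 : (∫ t in Icc (0:ℝ) T, 2 * (f t * (starRingEnd ℂ) (g t)))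
            = 2 * ∫ t in (0:ℝ)..T, f t * (starRingEnd ℂ) (g t) := by
          rw [integral_const_mul, intervalIntegral.integral_of_le hT',
            ← integral_Icc_eq_integral_Ioc]
        rw [keyPhi, e4]
end
end

section
/- Let H be a complex Hilbert space, U ⊆ H a closed subspace with inclusion map e : U → H, and C : H → H a bounded linear bijection with bounded inverse such that there exists θ > 0 with ⟨C a, a⟩ real and ⟨C a, a⟩ ≥ θ‖a‖² for all a ∈ H. Then: (i) the compression e* C e : U → U is invertible with bounded inverse; (ii) the operator P := e (e* C e)⁻¹ e* C satisfies P² = P, the range of P equals U, and the kernel of P equals C⁻¹(U^⊥); (iii) C P = P* C; (iv) ⟨C P a, b⟩ = ⟨C a, P b⟩ for all a, b ∈ H, i.e., P is the orthogonal projection onto U with respect to the inner product (a,b) ↦ ⟨C a, b⟩. -/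
open MeasureTheory Set

noncomputable section

set_option maxHeartbeats 1000000

open scoped InnerProductSpace

/-- Lemma on oblique projectors: if `C` is a positive definite
isomorphism of a Hilbert space `H` and `U` a closed subspace with inclusion `e`,
then the compression `e* C e` is boundedly invertible, and
`P = e (e* C e)⁻¹ e* C` is the projection onto `U` parallel to `C⁻¹(U^⊥)`,
satisfying `C P = P* C`; it is the orthogonal projection onto `U` in the inner
product `(a,b) ↦ ⟨C a, b⟩`. -/
theorem stmt11 {H : Type*} [NormedAddCommGroup H] [InnerProductSpace ℂ H]
    [CompleteSpace H] (U : Submodule ℂ H) [CompleteSpace U]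
    (C : H →L[ℂ] H) (hbij : Function.Bijective C)
    (θ : ℝ) (hθ : 0 < θ)
    (hpos : ∀ a : H, (inner ℂ (C a) a : ℂ).im = 0 ∧
      θ * ‖a‖ ^ 2 ≤ (inner ℂ (C a) a : ℂ).re) :
    Function.Bijective
      ((ContinuousLinearMap.adjoint U.subtypeL).comp (C.comp U.subtypeL)) ∧
    ∀ Kinv : U →L[ℂ] U,
      Kinv.comp ((ContinuousLinearMap.adjoint U.subtypeL).comp (C.comp U.subtypeL))
        = ContinuousLinearMap.id ℂ U →
      ((ContinuousLinearMap.adjoint U.subtypeL).comp (C.comp U.subtypeL)).comp Kinv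
        = ContinuousLinearMap.id ℂ U →
      ∀ P : H →L[ℂ] H,
        P = U.subtypeL.comp (Kinv.comp ((ContinuousLinearMap.adjoint U.subtypeL).comp C)) →
        (P.comp P = P ∧
         LinearMap.range (P : H →ₗ[ℂ] H) = U ∧
         LinearMap.ker (P : H →ₗ[ℂ] H) = Submodule.comap (C : H →ₗ[ℂ] H) Uᗮ ∧
         C.comp P = (ContinuousLinearMap.adjoint P).comp C ∧
         ∀ a b : H, (inner ℂ (C (P a)) b : ℂ) = inner ℂ (C a) (P b)) := by
  classical
  set e : U →L[ℂ] H := U.subtypeL with he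
  set eadj : H →L[ℂ] U := ContinuousLinearMap.adjoint e with headj
  set K : U →L[ℂ] U := eadj.comp (C.comp e) with hK
  -- C is self-adjoint
  have hCsa : IsSelfAdjoint C := by
    rw [ContinuousLinearMap.isSelfAdjoint_iff_isSymmetric]
    rw [show (C : H →ₗ[ℂ] H).IsSymmetric ↔ _ from
      LinearMap.isSymmetric_iff_inner_map_self_real (C : H →ₗ[ℂ] H)]
    intro v
    have := (hpos v).1
    rw [Complex.conj_eq_iff_im]
    exact this
  -- coercivity of K
  have hKinner : ∀ u : U, (inner ℂ (K u) u : ℂ) = inner ℂ (C (u : H)) (u : H) := by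
    intro u
    simp only [hK, ContinuousLinearMap.comp_apply, headj]
    rw [ContinuousLinearMap.adjoint_inner_left]
    rfl
  have hKre : ∀ u : U, θ * ‖u‖ ^ 2 ≤ (inner ℂ (K u) u : ℂ).re := by
    intro u
    rw [hKinner u]
    have h2 := (hpos (u : H)).2
    rw [show ‖u‖ = ‖(u : H)‖ from rfl]
    exact h2
  have hbound : ∀ u : U, θ * ‖u‖ ≤ ‖K u‖ := by
    intro u
    rcases eq_or_ne u 0 with rfl | hu
    · simp
    · have h1 : θ * ‖u‖ ^ 2 ≤ (inner ℂ (K u) u : ℂ).re := hKre u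
      have h2 : (inner ℂ (K u) u : ℂ).re ≤ ‖(inner ℂ (K u) u : ℂ)‖ := Complex.re_le_norm _
      have h3 : ‖(inner ℂ (K u) u : ℂ)‖ ≤ ‖K u‖ * ‖u‖ := norm_inner_le_norm _ _
      have hnu : (0 : ℝ) < ‖u‖ := norm_pos_iff.mpr hu
      nlinarith
  have hKinj : Function.Injective K := by
    intro x y hxy
    have : K (x - y) = 0 := by rw [map_sub, hxy, sub_self]
    have h := hbound (x - y)
    rw [this, norm_zero] at h
    have : ‖x - y‖ ≤ 0 := by
      have h0 : θ * ‖x - y‖ ≤ θ * 0 := by simpa using h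
      exact le_of_mul_le_mul_left h0 hθ
    have : x - y = 0 := by
      have := le_antisymm this (norm_nonneg _)
      exact norm_eq_zero.mp this
    exact sub_eq_zero.mp this
  have hKanti : AntilipschitzWith θ.toNNReal⁻¹ K := by
    refine ContinuousLinearMap.antilipschitz_of_bound K ?_
    intro x
    have h := hbound x
    have hc : ((θ.toNNReal⁻¹ : NNReal) : ℝ) = θ⁻¹ := by
      rw [NNReal.coe_inv, Real.coe_toNNReal _ hθ.le]
    rw [hc]
    calc ‖x‖ = θ⁻¹ * (θ * ‖x‖) := by field_simp
    _ ≤ θ⁻¹ * ‖K x‖ := mul_le_mul_of_nonneg_left h (by positivity)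
  have hKclosed : IsClosed (Set.range K) :=
    hKanti.isClosed_range K.uniformContinuous
  have hKsurj : Function.Surjective K := by
    have hcl : IsClosed ((LinearMap.range (K : U →ₗ[ℂ] U) : Submodule ℂ U) : Set U) := by
      have hset : ((LinearMap.range (K : U →ₗ[ℂ] U) : Submodule ℂ U) : Set U) = Set.range K := by
        ext x
        simp only [SetLike.mem_coe, LinearMap.mem_range, Set.mem_range, ContinuousLinearMap.coe_coe]
      rw [hset]; exact hKclosed
    haveI : CompleteSpace (LinearMap.range (K : U →ₗ[ℂ] U)) := hcl.completeSpace_coe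
    have horth : (LinearMap.range (K : U →ₗ[ℂ] U))ᗮ = ⊥ := by
      rw [Submodule.eq_bot_iff]
      intro w hw
      have h0 : (inner ℂ (K w) w : ℂ) = 0 :=
        (Submodule.mem_orthogonal _ w).mp hw (K w) (LinearMap.mem_range_self (K : U →ₗ[ℂ] U) w)
      have h := hKre w
      rw [h0] at h
      simp only [Complex.zero_re] at h
      have hsq : θ * ‖w‖ ^ 2 ≤ θ * 0 := by simpa using h
      have h2 : ‖w‖ ^ 2 ≤ 0 := le_of_mul_le_mul_left hsq hθ
      have h3 : ‖w‖ ^ 2 = 0 := le_antisymm h2 (sq_nonneg _)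
      exact norm_eq_zero.mp (pow_eq_zero_iff two_ne_zero |>.mp h3)
    have hrange : LinearMap.range (K : U →ₗ[ℂ] U) = ⊤ := by
      have := (LinearMap.range (K : U →ₗ[ℂ] U)).orthogonal_orthogonal
      rw [← this, horth, Submodule.bot_orthogonal_eq_top]
    exact LinearMap.range_eq_top.mp hrange
  refine ⟨⟨hKinj, hKsurj⟩, ?_⟩
  intro Kinv hKl hKr P hP
  have hKl' : ∀ u : U, Kinv (K u) = u := fun u =>
    congrFun (congrArg DFunLike.coe hKl) u
  have hKr' : ∀ u : U, K (Kinv u) = u := fun u =>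
    congrFun (congrArg DFunLike.coe hKr) u
  have hPapply : ∀ a : H, P a = e (Kinv (eadj (C a))) := by
    intro a; rw [hP]; rfl
  have hKapply : ∀ u : U, K u = eadj (C (e u)) := fun u => rfl
  -- K is self-adjoint
  have hKsa : ContinuousLinearMap.adjoint K = K := by
    rw [hK, ContinuousLinearMap.adjoint_comp, ContinuousLinearMap.adjoint_comp, headj,
      ContinuousLinearMap.adjoint_adjoint, hCsa.adjoint_eq]
    rfl
  -- Kinv is self-adjoint
  have hKinvl : (ContinuousLinearMap.adjoint Kinv).comp K = ContinuousLinearMap.id ℂ U := by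
    have := congrArg ContinuousLinearMap.adjoint hKr
    rwa [ContinuousLinearMap.adjoint_comp, hKsa, ContinuousLinearMap.adjoint_id] at this
  have hKinvr : K.comp (ContinuousLinearMap.adjoint Kinv) = ContinuousLinearMap.id ℂ U := by
    have := congrArg ContinuousLinearMap.adjoint hKl
    rwa [ContinuousLinearMap.adjoint_comp, hKsa, ContinuousLinearMap.adjoint_id] at this
  have hKinvsa : ContinuousLinearMap.adjoint Kinv = Kinv := by
    ext u
    have h1 : ∀ v : U, (ContinuousLinearMap.adjoint Kinv) (K v) = v := fun v =>
      congrFun (congrArg DFunLike.coe hKinvl) v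
    have heq : (ContinuousLinearMap.adjoint Kinv) u = Kinv u := by
      calc (ContinuousLinearMap.adjoint Kinv) u
          = (ContinuousLinearMap.adjoint Kinv) (K (Kinv u)) := by rw [hKr' u]
        _ = Kinv u := h1 _
    exact congrArg Subtype.val heq
  have hPP : P.comp P = P := by
    ext a
    simp only [ContinuousLinearMap.comp_apply]
    rw [hPapply, hPapply a]
    have : eadj (C (e (Kinv (eadj (C a))))) = K (Kinv (eadj (C a))) := rfl
    rw [this, hKr']
  have hrange : LinearMap.range (P : H →ₗ[ℂ] H) = U := by
    apply le_antisymm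
    · rintro x ⟨a, rfl⟩
      simp only [ContinuousLinearMap.coe_coe]
      rw [hPapply]
      exact (Kinv (eadj (C a))).2
    · intro x hx
      refine ⟨x, ?_⟩
      simp only [ContinuousLinearMap.coe_coe]
      rw [hPapply]
      have hx' : x = e (⟨x, hx⟩ : U) := rfl
      rw [hx']
      have : eadj (C (e ⟨x, hx⟩)) = K ⟨x, hx⟩ := rfl
      rw [this, hKl']
  have hker : LinearMap.ker (P : H →ₗ[ℂ] H) = Submodule.comap (C : H →ₗ[ℂ] H) Uᗮ := by
    ext a
    simp only [LinearMap.mem_ker, Submodule.mem_comap, ContinuousLinearMap.coe_coe]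
    rw [hPapply]
    constructor
    · intro h
      have h1 : Kinv (eadj (C a)) = 0 := by
        have h' : ((Kinv (eadj (C a)) : U) : H) = 0 := h
        exact Submodule.coe_eq_zero.mp h'
      have h2 : eadj (C a) = 0 := by
        have := hKr' (eadj (C a))
        rw [← this, h1, map_zero]
      rw [headj, U.adjoint_subtypeL] at h2
      exact Submodule.orthogonalProjectionOnto_eq_zero_iff.mp h2
    · intro h
      have h2 : eadj (C a) = 0 := by
        rw [headj, U.adjoint_subtypeL]
        exact Submodule.orthogonalProjectionOnto_eq_zero_iff.mpr h
      rw [h2, map_zero, map_zero]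
  have hPadj : ContinuousLinearMap.adjoint P = (C.comp e).comp (Kinv.comp eadj) := by
    rw [hP]
    simp only [ContinuousLinearMap.adjoint_comp]
    rw [hCsa.adjoint_eq, hKinvsa, headj, ContinuousLinearMap.adjoint_adjoint]
    ext a
    rfl
  have hCP : C.comp P = (ContinuousLinearMap.adjoint P).comp C := by
    rw [hPadj]
    ext a
    simp only [ContinuousLinearMap.comp_apply]
    rw [hPapply]
  refine ⟨hPP, hrange, hker, hCP, ?_⟩
  intro a b
  have h1 : C (P a) = (ContinuousLinearMap.adjoint P) (C a) := by
    have := congrFun (congrArg DFunLike.coe hCP) a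
    exact this
  rw [h1, ContinuousLinearMap.adjoint_inner_left]
end
end

section
/- Let T > 0 and n ≥ 1. For ξ ∈ (0,T) let P^ξ denote the operator on L²([0,T]; ℂⁿ) of multiplication by the indicator function of [0,ξ]. If D is a compact operator on L²([0,T]; ℂⁿ) such that D P^ξ = P^ξ D for every ξ ∈ (0,T), then D = 0. -/
open MeasureTheory Set ENNReal NNReal

noncomputable section

section Aux

variable {α : Type*} {E : Type*} [MeasurableSpace α] [NormedAddCommGroup E]
  {ν : Measure α} {s : Set α}

lemma norm_sq_eq (f : Lp E 2 ν) :
    ‖f‖ ^ 2 = (∫⁻ x, (‖f x‖₊ : ℝ≥0∞) ^ (2 : ℝ) ∂ν).toReal := by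
  rw [Lp.norm_def, eLpNorm_eq_lintegral_rpow_enorm_toReal (by norm_num) (by norm_num)]
  simp only [enorm_eq_nnnorm]
  rw [← ENNReal.toReal_pow]
  congr 1
  rw [← ENNReal.rpow_natCast _ 2, ← ENNReal.rpow_mul]
  norm_num

lemma lintegral_sq_ne_top (f : Lp E 2 ν) :
    (∫⁻ x, (‖f x‖₊ : ℝ≥0∞) ^ (2 : ℝ) ∂ν) ≠ ∞ := by
  have h := Lp.eLpNorm_lt_top f
  rw [eLpNorm_eq_lintegral_rpow_enorm_toReal (by norm_num) (by norm_num)] at h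
  simp only [enorm_eq_nnnorm] at h
  simp only [ENNReal.toReal_ofNat] at h
  intro hc
  rw [hc, ENNReal.top_rpow_of_pos (by norm_num)] at h
  exact (lt_irrefl _ h)

lemma lintegral_sq_eq_ofReal (f : Lp E 2 ν) :
    (∫⁻ x, (‖f x‖₊ : ℝ≥0∞) ^ (2 : ℝ) ∂ν) = ENNReal.ofReal (‖f‖ ^ 2) := by
  rw [norm_sq_eq, ENNReal.ofReal_toReal (lintegral_sq_ne_top f)]

lemma lintegral_sq_indicator (hs : MeasurableSet s) (h : α → E) :
    ∫⁻ x, (‖s.indicator h x‖₊ : ℝ≥0∞) ^ (2 : ℝ) ∂ν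
      = ∫⁻ x in s, (‖h x‖₊ : ℝ≥0∞) ^ (2 : ℝ) ∂ν := by
  rw [← lintegral_indicator hs]
  refine lintegral_congr fun x => ?_
  by_cases hx : x ∈ s <;> simp [hx, indicator_of_mem, indicator_of_notMem,
    ENNReal.zero_rpow_of_pos (by norm_num : (0:ℝ) < 2)]

lemma norm_sq_of_ae_indicator (w : Lp E 2 ν) (h : α → E) (hs : MeasurableSet s)
    (hw : ⇑w =ᵐ[ν] s.indicator h) :
    ‖w‖ ^ 2 = (∫⁻ x in s, (‖h x‖₊ : ℝ≥0∞) ^ (2 : ℝ) ∂ν).toReal := by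
  have he : (fun x => (‖w x‖₊ : ℝ≥0∞) ^ (2:ℝ)) =ᵐ[ν]
      (fun x => (‖s.indicator h x‖₊ : ℝ≥0∞) ^ (2:ℝ)) := hw.mono fun x hx => by simp only [hx]
  rw [norm_sq_eq, lintegral_congr_ae he, lintegral_sq_indicator hs]

lemma lintegral_sq_indicator_ne_top (w : Lp E 2 ν) (h : α → E) (hs : MeasurableSet s)
    (hw : ⇑w =ᵐ[ν] s.indicator h) :
    (∫⁻ x in s, (‖h x‖₊ : ℝ≥0∞) ^ (2 : ℝ) ∂ν) ≠ ∞ := by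
  have he : (fun x => (‖w x‖₊ : ℝ≥0∞) ^ (2:ℝ)) =ᵐ[ν]
      (fun x => (‖s.indicator h x‖₊ : ℝ≥0∞) ^ (2:ℝ)) := hw.mono fun x hx => by simp only [hx]
  rw [← lintegral_sq_indicator hs, ← lintegral_congr_ae he]
  exact lintegral_sq_ne_top w

lemma biUnion_Ioc_consec {t : ℕ → ℝ} (ht : Monotone t) (N : ℕ) :
    (⋃ k ∈ Finset.range N, Ioc (t k) (t (k + 1))) = Ioc (t 0) (t N) := by
  induction N with
  | zero => simp
  | succ N ih =>
    rw [Finset.range_add_one]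
    simp only [Finset.mem_insert, Set.iUnion_iUnion_eq_or_left]
    rw [Set.union_comm, ih, Ioc_union_Ioc_eq_Ioc (ht (Nat.zero_le N)) (ht (Nat.le_succ N))]

lemma pairwiseDisjoint_Ioc_consec {t : ℕ → ℝ} (ht : Monotone t) (N : ℕ) :
    Set.PairwiseDisjoint (↑(Finset.range N)) (fun k => Ioc (t k) (t (k + 1))) := by
  intro i _ j _ hij
  rcases lt_or_gt_of_ne hij with h | h
  · exact Set.Ioc_disjoint_Ioc.mpr (le_trans (min_le_left _ _) (le_max_of_le_right (ht h)))
  · exact Set.Ioc_disjoint_Ioc.mpr (le_trans (min_le_right _ _) (le_max_of_le_left (ht h)))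

lemma indicator_Icc_sub {E : Type*} [NormedAddCommGroup E] (g : ℝ → E) {a b : ℝ} (x : ℝ)
    (h0 : 0 ≤ a) (hab : a ≤ b) :
    (Icc 0 b).indicator g x - (Icc 0 a).indicator g x = (Ioc a b).indicator g x := by
  by_cases h1 : x ∈ Icc 0 a
  · have h2 : x ∈ Icc 0 b := ⟨h1.1, h1.2.trans hab⟩
    have h3 : x ∉ Ioc a b := fun hc => absurd h1.2 (not_le.mpr hc.1)
    simp [indicator_of_mem, h1, h2, indicator_of_notMem h3]
  · by_cases h2 : x ∈ Icc 0 b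
    · have h3 : x ∈ Ioc a b := ⟨lt_of_not_ge fun hc => h1 ⟨h2.1, hc⟩, h2.2⟩
      simp [indicator_of_mem, h2, h3, indicator_of_notMem h1]
    · have h3 : x ∉ Ioc a b := fun hc => h2 ⟨h0.trans hc.1.le, hc.2⟩
      simp [indicator_of_notMem, h1, h2, h3]

end Aux

/-- The measure `Lebesgue on [0,T]`. -/
def muT (T : ℝ) : Measure ℝ := volume.restrict (Icc (0 : ℝ) T)

set_option maxHeartbeats 1600000 in
/-- A compact operator on `L²([0,T];ℂⁿ)` commuting with all the
cut-off projectors `P^ξ` (multiplication by the indicator of `[0,ξ]`) vanishes. -/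
theorem stmt14 (T : ℝ) (hT : 0 < T) (n : ℕ) (hn : 1 ≤ n)
    (P : ℝ → (Lp (Fin n → ℂ) 2 (muT T) →L[ℂ] Lp (Fin n → ℂ) 2 (muT T)))
    (hP : ∀ ξ ∈ Ioo (0 : ℝ) T, ∀ f : Lp (Fin n → ℂ) 2 (muT T),
      (P ξ f : ℝ → Fin n → ℂ) =ᵐ[muT T] (Icc (0 : ℝ) ξ).indicator f)
    (D : Lp (Fin n → ℂ) 2 (muT T) →L[ℂ] Lp (Fin n → ℂ) 2 (muT T))
    (hD : IsCompactOperator D)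
    (hcomm : ∀ ξ ∈ Ioo (0 : ℝ) T, D.comp (P ξ) = (P ξ).comp D) :
    D = 0 := by
  by_contra hD0
  -- a vector with `D f ≠ 0`
  have hex : ∃ f : Lp (Fin n → ℂ) 2 (muT T), D f ≠ 0 := by
    by_contra h
    push_neg at h
    exact hD0 (ContinuousLinearMap.ext fun f => by simp [h f])
  obtain ⟨f, hf⟩ := hex
  have hf0 : f ≠ 0 := fun h => hf (by simp [h])
  set C : ℝ≥0∞ := ∫⁻ x, (‖(D f : ℝ → Fin n → ℂ) x‖₊ : ℝ≥0∞) ^ (2:ℝ) ∂(muT T) with hCdef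
  set F : ℝ≥0∞ := ∫⁻ x, (‖(f : ℝ → Fin n → ℂ) x‖₊ : ℝ≥0∞) ^ (2:ℝ) ∂(muT T) with hFdef
  have hC0 : C ≠ 0 := by
    intro h
    apply hf
    have := norm_sq_eq (D f)
    rw [← hCdef, h] at this
    simp only [ENNReal.toReal_zero, pow_eq_zero_iff two_ne_zero, norm_eq_zero] at this
    exact this
  have hF0 : F ≠ 0 := by
    intro h
    apply hf0
    have := norm_sq_eq f
    rw [← hFdef, h] at this
    simp only [ENNReal.toReal_zero, pow_eq_zero_iff two_ne_zero, norm_eq_zero] at this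
    exact this
  have hCtop : C ≠ ∞ := lintegral_sq_ne_top (D f)
  have hFtop : F ≠ ∞ := lintegral_sq_ne_top f
  set γ : ℝ := C.toReal / (2 * F.toReal) with hγdef
  have hγpos : 0 < γ := by
    apply div_pos (ENNReal.toReal_pos hC0 hCtop)
    have := ENNReal.toReal_pos hF0 hFtop
    linarith
  -- key claim: small-support nearly-norm-attaining unit vectors
  have claim : ∀ m : ℕ, ∃ (s : Set ℝ) (g : Lp (Fin n → ℂ) 2 (muT T)),
      MeasurableSet s ∧ muT T s ≤ ENNReal.ofReal (T / (m + 2 : ℕ)) ∧ ‖g‖ = 1 ∧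
      γ ≤ ‖D g‖ ^ 2 ∧
      ∃ v : ℝ → Fin n → ℂ, (D g : ℝ → Fin n → ℂ) =ᵐ[muT T] s.indicator v := by
    intro m
    set N : ℕ := m + 2 with hNdef
    have hNR : (0:ℝ) < (N:ℝ) := by positivity
    set δ : ℝ := T / N with hδdef
    have hδpos : 0 < δ := div_pos hT hNR
    set t : ℕ → ℝ := fun k => k * δ with htdef
    have htmono : Monotone t := fun i j hij =>
      mul_le_mul_of_nonneg_right (Nat.cast_le.mpr hij) hδpos.le
    have ht0 : t 0 = 0 := by simp [htdef]
    have htN : t N = T := by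
      simp only [htdef, hδdef]
      field_simp
    have htnn : ∀ k, 0 ≤ t k := fun k => by positivity
    have htIoo : ∀ k, 0 < k → k < N → t k ∈ Ioo (0:ℝ) T := by
      intro k hk1 hk2
      refine ⟨by positivity, ?_⟩
      calc (k:ℝ) * δ < (N:ℝ) * δ :=
            mul_lt_mul_of_pos_right (Nat.cast_lt.mpr hk2) hδpos
        _ = T := htN
    set Q : ℕ → (Lp (Fin n → ℂ) 2 (muT T) →L[ℂ] Lp (Fin n → ℂ) 2 (muT T)) :=
      fun j => if j = 0 then 0 else if N ≤ j then ContinuousLinearMap.id ℂ _ else P (t j)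
      with hQdef
    have hQ0 : Q 0 = 0 := by simp [hQdef]
    have hQN : Q N = ContinuousLinearMap.id ℂ _ := by
      simp only [hQdef]
      rw [if_neg (by omega), if_pos le_rfl]
    have hQP : ∀ j, 0 < j → j < N → Q j = P (t j) := by
      intro j h1 h2
      simp only [hQdef]
      rw [if_neg (by omega), if_neg (by omega)]
    have hQcomm : ∀ j (x : Lp (Fin n → ℂ) 2 (muT T)), D (Q j x) = Q j (D x) := by
      intro j x
      by_cases h0 : j = 0
      · simp [h0, hQ0]
      by_cases hN : N ≤ j
      · have : Q j = ContinuousLinearMap.id ℂ _ := by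
          simp only [hQdef]; rw [if_neg h0, if_pos hN]
        simp [this]
      · rw [hQP j (Nat.pos_of_ne_zero h0) (lt_of_not_ge hN)]
        have hcj := hcomm (t j) (htIoo j (Nat.pos_of_ne_zero h0) (lt_of_not_ge hN))
        have := DFunLike.congr_fun hcj x
        simpa using this
    have hzero : muT T ({(0:ℝ)}) = 0 := by
      rw [show muT T = volume.restrict (Icc 0 T) from rfl,
        Measure.restrict_apply (measurableSet_singleton (0:ℝ))]
      exact measure_mono_null inter_subset_left Real.volume_singleton
    have hmemIcc : ∀ᵐ x ∂(muT T), x ∈ Icc (0:ℝ) T := ae_restrict_mem measurableSet_Icc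
    have hRae : ∀ (h : Lp (Fin n → ℂ) 2 (muT T)) (k : ℕ), k < N →
        (⇑(Q (k+1) h - Q k h) : ℝ → Fin n → ℂ)
          =ᵐ[muT T] (Ioc (t k) (t (k+1))).indicator ⇑h := by
      intro h k hk
      have hsub := Lp.coeFn_sub (Q (k+1) h) (Q k h)
      rcases Nat.eq_zero_or_pos k with hk0 | hkpos
      · subst hk0
        have h1 : ⇑(Q 1 h) =ᵐ[muT T] (Icc 0 (t 1)).indicator ⇑h := by
          rw [hQP 1 one_pos (by omega)]
          exact hP (t 1) (htIoo 1 one_pos (by omega)) h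
        have hz : ⇑(Q 0 h) =ᵐ[muT T] (0 : ℝ → Fin n → ℂ) := by
          rw [hQ0, ContinuousLinearMap.zero_apply]
          exact Lp.coeFn_zero _ _ _
        have hne : ∀ᵐ x ∂(muT T), x ≠ (0:ℝ) := by
          have hset : {x : ℝ | ¬ x ≠ 0} = {(0:ℝ)} := by ext x; simp
          rw [ae_iff, hset]
          exact hzero
        filter_upwards [hsub, h1, hz, hne] with x hx1 hx2 hx3 hx0
        rw [hx1, Pi.sub_apply, hx2, hx3, Pi.zero_apply, sub_zero, ht0]
        by_cases hx : x ∈ Ioc (0:ℝ) (t 1)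
        · rw [indicator_of_mem hx,
            indicator_of_mem (show x ∈ Icc (0:ℝ) (t 1) from ⟨hx.1.le, hx.2⟩)]
        · rw [indicator_of_notMem hx, indicator_of_notMem
            (show x ∉ Icc (0:ℝ) (t 1) from
              fun hc => hx ⟨lt_of_le_of_ne hc.1 (Ne.symm hx0), hc.2⟩)]
      · rcases Nat.lt_or_ge (k+1) N with hkN | hkN
        · have h1 : ⇑(Q (k+1) h) =ᵐ[muT T] (Icc 0 (t (k+1))).indicator ⇑h := by
            rw [hQP (k+1) (by omega) hkN]
            exact hP (t (k+1)) (htIoo (k+1) (by omega) hkN) h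
          have h2 : ⇑(Q k h) =ᵐ[muT T] (Icc 0 (t k)).indicator ⇑h := by
            rw [hQP k hkpos (by omega)]
            exact hP (t k) (htIoo k hkpos (by omega)) h
          filter_upwards [hsub, h1, h2] with x hx1 hx2 hx3
          rw [hx1, Pi.sub_apply, hx2, hx3]
          exact indicator_Icc_sub ⇑h x (htnn k) (htmono (Nat.le_succ k))
        · have hkN' : k + 1 = N := by omega
          have h2 : ⇑(Q k h) =ᵐ[muT T] (Icc 0 (t k)).indicator ⇑h := by
            rw [hQP k hkpos (by omega)]
            exact hP (t k) (htIoo k hkpos (by omega)) h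
          have hid : ⇑(Q (k+1) h) =ᵐ[muT T] ⇑h := by
            rw [hkN', hQN, ContinuousLinearMap.id_apply]
          filter_upwards [hsub, hid, h2, hmemIcc] with x hx1 hx2 hx3 hxm
          rw [hx1, Pi.sub_apply, hx2, hx3, hkN', htN]
          by_cases hxk : x ≤ t k
          · rw [indicator_of_mem (show x ∈ Icc (0:ℝ) (t k) from ⟨hxm.1, hxk⟩),
              indicator_of_notMem
                (show x ∉ Ioc (t k) T from fun hc => absurd hxk (not_le.mpr hc.1)), sub_self]
          · rw [indicator_of_notMem (show x ∉ Icc (0:ℝ) (t k) from fun hc => hxk hc.2),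
              indicator_of_mem (show x ∈ Ioc (t k) T from ⟨not_le.mp hxk, hxm.2⟩), sub_zero]
    have hAm : ∀ k : ℕ, MeasurableSet (Ioc (t k) (t (k+1))) := fun k => measurableSet_Ioc
    set a : ℕ → ℝ≥0∞ := fun k =>
      ∫⁻ x in Ioc (t k) (t (k+1)), (‖(D f : ℝ → Fin n → ℂ) x‖₊ : ℝ≥0∞) ^ (2:ℝ) ∂(muT T)
      with hadef
    set b : ℕ → ℝ≥0∞ := fun k =>
      ∫⁻ x in Ioc (t k) (t (k+1)), (‖(f : ℝ → Fin n → ℂ) x‖₊ : ℝ≥0∞) ^ (2:ℝ) ∂(muT T)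
      with hbdef
    have hDRf : ∀ k, D (Q (k+1) f - Q k f) = Q (k+1) (D f) - Q k (D f) := by
      intro k; rw [map_sub, hQcomm, hQcomm]
    have ha : ∀ k, k < N → ‖Q (k+1) (D f) - Q k (D f)‖ ^ 2 = (a k).toReal := fun k hk =>
      norm_sq_of_ae_indicator _ _ (hAm k) (hRae (D f) k hk)
    have hb : ∀ k, k < N → ‖Q (k+1) f - Q k f‖ ^ 2 = (b k).toReal := fun k hk =>
      norm_sq_of_ae_indicator _ _ (hAm k) (hRae f k hk)
    have hatop : ∀ k, k < N → a k ≠ ∞ := fun k hk =>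
      lintegral_sq_indicator_ne_top _ _ (hAm k) (hRae (D f) k hk)
    have hbtop : ∀ k, k < N → b k ≠ ∞ := fun k hk =>
      lintegral_sq_indicator_ne_top _ _ (hAm k) (hRae f k hk)
    have hbsum : ∑ k ∈ Finset.range N, b k ≤ F := by
      simp only [hbdef]
      rw [← lintegral_biUnion_finset (pairwiseDisjoint_Ioc_consec htmono N)
        (fun k _ => hAm k)]
      exact setLIntegral_le_lintegral _ _
    have hasum : ∑ k ∈ Finset.range N, a k = C := by
      have hcnull : muT T ((Ioc (0:ℝ) T)ᶜ) = 0 := by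
        have hseteq : (Ioc (0:ℝ) T)ᶜ ∩ Icc 0 T = {(0:ℝ)} := by
          ext x
          simp only [mem_inter_iff, mem_compl_iff, mem_Ioc, mem_Icc, mem_singleton_iff, not_and,
            not_le]
          constructor
          · rintro ⟨h1, h2, h3⟩
            by_contra hx
            have hx0 : 0 < x := lt_of_le_of_ne h2 (Ne.symm hx)
            exact absurd (h1 hx0) (not_lt.mpr h3)
          · rintro rfl
            exact ⟨fun h => absurd h (lt_irrefl 0), le_rfl, hT.le⟩
        rw [show muT T = volume.restrict (Icc 0 T) from rfl,
          Measure.restrict_apply measurableSet_Ioc.compl, hseteq]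
        exact Real.volume_singleton
      simp only [hadef]
      rw [← lintegral_biUnion_finset (pairwiseDisjoint_Ioc_consec htmono N)
        (fun k _ => hAm k), biUnion_Ioc_consec htmono N, ht0, htN, hCdef]
      rw [← lintegral_add_compl (fun x => (‖(D f : ℝ → Fin n → ℂ) x‖₊ : ℝ≥0∞) ^ (2:ℝ))
        measurableSet_Ioc (μ := muT T) (A := Ioc (0:ℝ) T),
        setLIntegral_measure_zero _ _ hcnull, add_zero]
    have hCpos := ENNReal.toReal_pos hC0 hCtop
    have hFpos := ENNReal.toReal_pos hF0 hFtop
    have hsel : ∃ k, k < N ∧ b k ≠ 0 ∧ C * b k ≤ 2 * F * a k := by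
      by_contra hcon
      push_neg at hcon
      have hkey : ∀ k ∈ Finset.range N, 2 * F * a k ≤ C * b k := by
        intro k hk
        rw [Finset.mem_range] at hk
        by_cases hbk : b k = 0
        · have hfk : Q (k+1) f - Q k f = 0 := by
            have h1 := hb k hk
            rw [hbk, ENNReal.toReal_zero] at h1
            exact norm_eq_zero.mp ((pow_eq_zero_iff two_ne_zero).mp h1)
          have hak : a k = 0 := by
            have h2 := ha k hk
            rw [← hDRf k, hfk, map_zero, norm_zero] at h2
            have h3 : (a k).toReal = 0 := by
              rw [← h2]; norm_num
            exact ((ENNReal.toReal_eq_zero_iff (a k)).mp h3).resolve_right (hatop k hk)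
          rw [hak, hbk, mul_zero, mul_zero]
        · exact le_of_lt (hcon k hk hbk)
      have hsum2 : 2 * F * C ≤ C * F := by
        calc 2 * F * C = ∑ k ∈ Finset.range N, 2 * F * a k := by
              rw [← Finset.mul_sum, hasum]
          _ ≤ ∑ k ∈ Finset.range N, C * b k := Finset.sum_le_sum hkey
          _ = C * ∑ k ∈ Finset.range N, b k := by rw [Finset.mul_sum]
          _ ≤ C * F := mul_le_mul_right hbsum C
      have hCF : C * F ≠ ∞ := ENNReal.mul_ne_top hCtop hFtop
      have hr := ENNReal.toReal_mono hCF hsum2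
      rw [ENNReal.toReal_mul, ENNReal.toReal_mul, ENNReal.toReal_mul,
        ENNReal.toReal_ofNat] at hr
      nlinarith
    obtain ⟨k, hkN, hbk, hkey⟩ := hsel
    have hbK := hbtop k hkN
    have haK := hatop k hkN
    have hbRpos : 0 < (b k).toReal := ENNReal.toReal_pos hbk hbK
    have hu2 := hb k hkN
    have hupos : 0 < ‖Q (k+1) f - Q k f‖ := by
      nlinarith [norm_nonneg (Q (k+1) f - Q k f)]
    set u : Lp (Fin n → ℂ) 2 (muT T) := Q (k+1) f - Q k f with hudef
    set c : ℂ := ((‖u‖ : ℝ) : ℂ)⁻¹ with hcdef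
    have hcnorm : ‖c‖ = ‖u‖⁻¹ := by
      rw [hcdef, norm_inv, Complex.norm_real, Real.norm_eq_abs, abs_of_nonneg (norm_nonneg u)]
    refine ⟨Ioc (t k) (t (k+1)), c • u, hAm k, ?_, ?_, ?_, ?_⟩
    · have h1 : muT T (Ioc (t k) (t (k+1))) ≤ volume (Ioc (t k) (t (k+1))) := by
        rw [show muT T = volume.restrict (Icc 0 T) from rfl,
          Measure.restrict_apply (hAm k)]
        exact measure_mono inter_subset_left
      rw [Real.volume_Ioc] at h1
      refine le_trans h1 (le_of_eq ?_)
      congr 1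
      simp only [htdef, hδdef, hNdef]
      push_cast
      ring
    · rw [norm_smul, hcnorm, inv_mul_cancel₀ (ne_of_gt hupos)]
    · have hDu2 : ‖D u‖ ^ 2 = (a k).toReal := by rw [hDRf k]; exact ha k hkN
      rw [_root_.map_smul, norm_smul, hcnorm, mul_pow, hDu2, inv_pow, hu2]
      have harealineq : C.toReal * (b k).toReal ≤ 2 * F.toReal * (a k).toReal := by
        have h4 := ENNReal.toReal_mono
          (ENNReal.mul_ne_top (ENNReal.mul_ne_top (by norm_num) hFtop) haK) hkey
        rw [ENNReal.toReal_mul, ENNReal.toReal_mul, ENNReal.toReal_mul,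
          ENNReal.toReal_ofNat] at h4
        exact h4
      have hstep : γ ≤ (a k).toReal / (b k).toReal := by
        rw [hγdef, div_le_div_iff₀ (by positivity) hbRpos]
        nlinarith
      rw [div_eq_mul_inv, mul_comm] at hstep
      exact hstep
    · refine ⟨fun x => c • (D f : ℝ → Fin n → ℂ) x, ?_⟩
      have hDae : (⇑(D u) : ℝ → Fin n → ℂ)
          =ᵐ[muT T] (Ioc (t k) (t (k+1))).indicator ⇑(D f) := by
        rw [hDRf k]
        exact hRae (D f) k hkN
      have hsm := Lp.coeFn_smul c (D u)
      rw [_root_.map_smul]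
      filter_upwards [hsm, hDae] with x hx1 hx2
      rw [hx1, Pi.smul_apply, hx2]
      by_cases hx : x ∈ Ioc (t k) (t (k+1))
      · rw [indicator_of_mem hx, indicator_of_mem hx]
      · rw [indicator_of_notMem hx, indicator_of_notMem hx, smul_zero]
  choose s g hs hsmall hg1 hγle hsupp using claim
  -- compactness: extract a convergent subsequence of `D (g m)`
  have hK : IsCompact (closure (⇑D '' Metric.closedBall 0 1)) :=
    hD.isCompact_closure_image_closedBall 1
  have hmem : ∀ m, D (g m) ∈ closure (⇑D '' Metric.closedBall 0 1) := fun m =>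
    subset_closure ⟨g m, by simp [hg1 m], rfl⟩
  obtain ⟨y, -, φ, hφ, htend⟩ := hK.tendsto_subseq hmem
  -- the limit has positive norm
  have hynorm : γ ≤ ‖y‖ ^ 2 := by
    have h1 : Filter.Tendsto (fun m => ‖D (g (φ m))‖ ^ 2) Filter.atTop (nhds (‖y‖ ^ 2)) :=
      ((continuous_norm.tendsto y).comp htend).pow 2
    exact ge_of_tendsto' h1 fun m => hγle (φ m)
  have hLy0 : (∫⁻ x, (‖(y : ℝ → Fin n → ℂ) x‖₊ : ℝ≥0∞) ^ (2:ℝ) ∂(muT T)) ≠ 0 := by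
    intro h
    have h2 := norm_sq_eq y
    rw [h] at h2
    simp only [ENNReal.toReal_zero] at h2
    nlinarith [hynorm, hγpos]
  -- but the limit must vanish
  have hL0 : (∫⁻ x, (‖(y : ℝ → Fin n → ℂ) x‖₊ : ℝ≥0∞) ^ (2:ℝ) ∂(muT T)) = 0 := by
    have key : ∀ m, (∫⁻ x, (‖(y : ℝ → Fin n → ℂ) x‖₊ : ℝ≥0∞) ^ (2:ℝ) ∂(muT T)) ≤
        (∫⁻ x in s (φ m), (‖(y : ℝ → Fin n → ℂ) x‖₊ : ℝ≥0∞) ^ (2:ℝ) ∂(muT T))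
          + ENNReal.ofReal (‖y - D (g (φ m))‖ ^ 2) := by
      intro m
      obtain ⟨v, hv⟩ := hsupp (φ m)
      have hz : ∀ᵐ x ∂((muT T).restrict (s (φ m))ᶜ), (D (g (φ m)) : ℝ → Fin n → ℂ) x = 0 := by
        filter_upwards [ae_restrict_of_ae hv, ae_restrict_mem (hs (φ m)).compl] with x hx hxc
        rw [hx, indicator_of_notMem hxc]
      have hsub : ∀ᵐ x ∂((muT T).restrict (s (φ m))ᶜ),
          (‖((y - D (g (φ m)) : Lp (Fin n → ℂ) 2 (muT T)) : ℝ → Fin n → ℂ) x‖₊ : ℝ≥0∞) ^ (2:ℝ)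
            = (‖(y : ℝ → Fin n → ℂ) x‖₊ : ℝ≥0∞) ^ (2:ℝ) := by
        filter_upwards [ae_restrict_of_ae (Lp.coeFn_sub y (D (g (φ m)))), hz] with x h1 h2
        rw [h1, Pi.sub_apply, h2, sub_zero]
      have hcompl : (∫⁻ x in (s (φ m))ᶜ, (‖(y : ℝ → Fin n → ℂ) x‖₊ : ℝ≥0∞) ^ (2:ℝ) ∂(muT T))
          ≤ ENNReal.ofReal (‖y - D (g (φ m))‖ ^ 2) := by
        rw [← lintegral_sq_eq_ofReal, ← lintegral_congr_ae hsub]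
        exact setLIntegral_le_lintegral _ _
      calc (∫⁻ x, (‖(y : ℝ → Fin n → ℂ) x‖₊ : ℝ≥0∞) ^ (2:ℝ) ∂(muT T))
          = (∫⁻ x in s (φ m), (‖(y : ℝ → Fin n → ℂ) x‖₊ : ℝ≥0∞) ^ (2:ℝ) ∂(muT T))
            + (∫⁻ x in (s (φ m))ᶜ, (‖(y : ℝ → Fin n → ℂ) x‖₊ : ℝ≥0∞) ^ (2:ℝ) ∂(muT T)) :=
          (lintegral_add_compl _ (hs (φ m))).symm
        _ ≤ _ := add_le_add_right hcompl _
    have hbase : Filter.Tendsto (fun k : ℕ => ENNReal.ofReal (T / ((k : ℝ) + 2)))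
        Filter.atTop (nhds 0) := by
      have h1 : Filter.Tendsto (fun k : ℕ => T / ((k : ℝ) + 2)) Filter.atTop (nhds 0) := by
        have h0 := (tendsto_const_div_atTop_nhds_zero_nat T).comp (Filter.tendsto_add_atTop_nat 2)
        exact h0.congr fun k => by simp only [Function.comp_apply]; push_cast; ring
      simpa using ENNReal.tendsto_ofReal h1
    have hmeas : Filter.Tendsto (fun m => muT T (s (φ m))) Filter.atTop (nhds 0) := by
      refine tendsto_of_tendsto_of_tendsto_of_le_of_le tendsto_const_nhds
        (hbase.comp hφ.tendsto_atTop) (fun m => zero_le) (fun m => ?_)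
      have := hsmall (φ m)
      simpa [Nat.cast_add] using this
    have hA : Filter.Tendsto
        (fun m => ∫⁻ x in s (φ m), (‖(y : ℝ → Fin n → ℂ) x‖₊ : ℝ≥0∞) ^ (2:ℝ) ∂(muT T))
        Filter.atTop (nhds 0) := tendsto_setLIntegral_zero (lintegral_sq_ne_top y) hmeas
    have hB : Filter.Tendsto (fun m => ENNReal.ofReal (‖y - D (g (φ m))‖ ^ 2))
        Filter.atTop (nhds 0) := by
      have h1 : Filter.Tendsto (fun m => ‖y - D (g (φ m))‖ ^ 2) Filter.atTop (nhds 0) := by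
        have h2 : Filter.Tendsto (fun m => y - D (g (φ m))) Filter.atTop (nhds 0) := by
          simpa using (tendsto_const_nhds (x := y)).sub htend
        simpa using (h2.norm.pow 2)
      simpa using ENNReal.tendsto_ofReal h1
    have hsum := hA.add hB
    rw [add_zero] at hsum
    exact le_zero_iff.mp (ge_of_tendsto' hsum key)
  exact hLy0 hL0
end
end
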